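/- arXiv:1206.3090 — 7 statements merged into one kernel-verified Lean document; each statement's English description precedes it below -/
import Mathlib

section
/- Let K be an infinite field, let n ≥ 1 and 1 ≤ k ≤ n, and let C = {a ∈ K^n : a_1 = … = a_k = 0} be the coordinate subspace defined by the vanishing of the first k coordinates. Let I ⊆ K[x_1,…,x_n] be an ideal and μ a natural number such that I ⊆ m_a^μ for every point a ∈ C. Then I ⊆ (x_1,…,x_k)^μ, the μ-th power of the ideal generated by x_1,…,x_k. -/
/-- The maximal ideal of `K[x_i : i ∈ σ]` at the point `a`. -/
noncomputable def maxIdeal (K : Type*) [Field K] (σ : Type*) (a : σ → K) :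
    Ideal (MvPolynomial σ K) :=
  Ideal.span (Set.range fun i => MvPolynomial.X i - MvPolynomial.C (a i))

open MvPolynomial

namespace OrderAux

variable {K : Type*} [Field K] {n k : ℕ}

/-- the weight of an exponent vector: sum over coordinates `< k` -/
noncomputable def w (k : ℕ) (d : Fin n →₀ ℕ) : ℕ :=
  ∑ i ∈ Finset.univ.filter (fun i : Fin n => (i : ℕ) < k), d i

lemma w_add (d1 d2 : Fin n →₀ ℕ) : w k (d1 + d2) = w k d1 + w k d2 := by
  simp [w, Finset.sum_add_distrib]

lemma w_single {i : Fin n} (hi : (i : ℕ) < k) : w k (Finsupp.single i 1) = 1 := by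
  classical
  rw [w, Finset.sum_eq_single i]
  · simp
  · intro b _ hb; simp [Finsupp.single_apply, Ne.symm hb]
  · intro hnot; exact absurd (by simpa using hi) hnot

/-- the span of the first `k` variables -/
noncomputable def J (K : Type*) [Field K] (n k : ℕ) : Ideal (MvPolynomial (Fin n) K) :=
  Ideal.span {g : MvPolynomial (Fin n) K | ∃ i : Fin n, (i : ℕ) < k ∧ g = MvPolynomial.X i}

lemma mem_J_weight {g : MvPolynomial (Fin n) K} (hg : g ∈ J K n k) :
    ∀ d ∈ g.support, 1 ≤ w k d := by
  refine Submodule.span_induction ?_ ?_ ?_ ?_ hg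
  · rintro x ⟨i, hi, rfl⟩ d hd
    rw [MvPolynomial.support_X, Finset.mem_singleton] at hd
    subst hd; rw [w_single hi]
  · simp
  · intro x y _ _ hx hy d hd
    rcases Finset.mem_union.mp (MvPolynomial.support_add hd) with h | h
    · exact hx d h
    · exact hy d h
  · intro r x _ hx d hd
    have : d ∈ (r * x).support := by simpa [smul_eq_mul] using hd
    obtain ⟨d1, _, d2, hd2, rfl⟩ := Finset.mem_add.mp (MvPolynomial.support_mul r x this)
    calc 1 ≤ w k d2 := hx d2 hd2
    _ ≤ w k d1 + w k d2 := Nat.le_add_left _ _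
    _ = w k (d1 + d2) := (w_add d1 d2).symm

lemma mem_J_pow_weight {μ : ℕ} {f : MvPolynomial (Fin n) K} (hf : f ∈ (J K n k) ^ μ) :
    ∀ d ∈ f.support, μ ≤ w k d := by
  induction μ generalizing f with
  | zero => intro d _; exact Nat.zero_le _
  | succ m ih =>
    rw [pow_succ] at hf
    refine Submodule.mul_induction_on hf ?_ ?_
    · intro x hx y hy d hd
      obtain ⟨d1, hd1, d2, hd2, rfl⟩ := Finset.mem_add.mp (MvPolynomial.support_mul x y hd)
      rw [w_add]
      have h1 := ih hx d1 hd1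
      have h2 := mem_J_weight hy d2 hd2
      omega
    · intro x y hx hy d hd
      rcases Finset.mem_union.mp (MvPolynomial.support_add hd) with h | h
      · exact hx d h
      · exact hy d h

lemma monomial_mem_J_pow {μ : ℕ} {d : Fin n →₀ ℕ} (c : K) (hd : μ ≤ w k d) :
    MvPolynomial.monomial d c ∈ (J K n k) ^ μ := by
  induction μ generalizing d with
  | zero => simp
  | succ m ih =>
    have hpos : 0 < w k d := lt_of_lt_of_le (Nat.succ_pos m) hd
    have : ∃ i : Fin n, (i : ℕ) < k ∧ 0 < d i := by
      by_contra hcon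
      push_neg at hcon
      have : w k d = 0 := Finset.sum_eq_zero fun i hi => by
        have := hcon i (Finset.mem_filter.mp hi).2
        omega
      omega
    obtain ⟨i, hik, hdi⟩ := this
    have hle : Finsupp.single i 1 ≤ d := by
      rw [Finsupp.single_le_iff]; omega
    have hdec : Finsupp.single i 1 + (d - Finsupp.single i 1) = d :=
      add_tsub_cancel_of_le hle
    have hw : m ≤ w k (d - Finsupp.single i 1) := by
      have := w_add (k := k) (Finsupp.single i 1) (d - Finsupp.single i 1)
      rw [hdec, w_single hik] at this
      omega
    have : MvPolynomial.monomial d c =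
        MvPolynomial.X i * MvPolynomial.monomial (d - Finsupp.single i 1) c := by
      rw [MvPolynomial.X, MvPolynomial.monomial_mul, one_mul, hdec]
    rw [this, pow_succ']
    exact Ideal.mul_mem_mul (Ideal.subset_span ⟨i, hik, rfl⟩) (ih hw)

lemma aeval_monomial_split (b : Fin n → K) (d : Fin n →₀ ℕ) (c : K) :
    aeval (fun i : Fin n => if (i : ℕ) < k then (X i : MvPolynomial (Fin n) K) else C (b i))
      (monomial d c)
    = monomial (d.filter fun i : Fin n => (i : ℕ) < k)
        (c * eval b (monomial (d.filter fun i : Fin n => ¬ (i : ℕ) < k) (1 : K))) := by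
  classical
  set g : Fin n → MvPolynomial (Fin n) K := fun i => if (i : ℕ) < k then X i else C (b i) with hg
  rw [aeval_monomial]
  rw [← Finsupp.prod_filter_mul_prod_filter_not (fun i : Fin n => (i : ℕ) < k) d
    (fun i m => g i ^ m)]
  have h1 : (d.filter fun i : Fin n => (i : ℕ) < k).prod (fun i m => g i ^ m)
      = monomial (d.filter fun i : Fin n => (i : ℕ) < k) (1 : K) := by
    rw [monomial_eq, map_one, one_mul]
    refine Finsupp.prod_congr fun x hx => ?_
    rw [Finsupp.support_filter, Finset.mem_filter] at hx
    rw [hg]; simp [hx.2]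
  have h2 : (d.filter fun i : Fin n => ¬ (i : ℕ) < k).prod (fun i m => g i ^ m)
      = C (eval b (monomial (d.filter fun i : Fin n => ¬ (i : ℕ) < k) (1 : K))) := by
    rw [eval_monomial, one_mul, map_finsuppProd]
    refine Finsupp.prod_congr fun x hx => ?_
    rw [Finsupp.support_filter, Finset.mem_filter] at hx
    rw [hg]; simp [hx.2]
  rw [h1, h2, algebraMap_eq]
  rw [mul_comm ((monomial _) 1) _, ← mul_assoc, ← C_mul, C_mul_monomial, mul_one]

end OrderAux

open OrderAux

lemma w_filter (d : Fin n →₀ ℕ) :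
    w k (d.filter fun i : Fin n => (i : ℕ) < k) = w k d := by
  refine Finset.sum_congr rfl fun i hi => ?_
  exact Finsupp.filter_apply_pos _ _ (Finset.mem_filter.mp hi).2

lemma filter_inj {d d0 : Fin n →₀ ℕ}
    (h1 : (d.filter fun i : Fin n => (i : ℕ) < k) = d0.filter fun i : Fin n => (i : ℕ) < k)
    (h2 : (d.filter fun i : Fin n => ¬ (i : ℕ) < k)
        = d0.filter fun i : Fin n => ¬ (i : ℕ) < k) : d = d0 := by
  ext i
  by_cases hi : (i : ℕ) < k
  · have := DFunLike.congr_fun h1 i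
    simpa [Finsupp.filter_apply, hi] using this
  · have := DFunLike.congr_fun h2 i
    simpa [Finsupp.filter_apply, hi, Nat.not_lt.mp hi] using this


/-- If an ideal `I` has order `≥ μ` at every point of the coordinate subspace
`C = {a : a_1 = … = a_k = 0}`, then `I ⊆ (x_1,…,x_k)^μ`. -/
theorem order_ge_on_center_imp_mem_power (K : Type*) [Field K] [Infinite K]
    (n k : ℕ) (hn : 1 ≤ n) (hk1 : 1 ≤ k) (hk2 : k ≤ n)
    (I : Ideal (MvPolynomial (Fin n) K)) (μ : ℕ)
    (h : ∀ a : Fin n → K, (∀ i : Fin n, (i : ℕ) < k → a i = 0) →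
      I ≤ maxIdeal K (Fin n) a ^ μ) :
    I ≤ (Ideal.span {g : MvPolynomial (Fin n) K |
      ∃ i : Fin n, (i : ℕ) < k ∧ g = MvPolynomial.X i}) ^ μ := by
  classical
  intro f hf
  show f ∈ (J K n k) ^ μ
  have key : ∀ d ∈ f.support, μ ≤ w k d := by
    intro d0 hd0
    by_contra hcon
    push_neg at hcon
    set e0 : Fin n →₀ ℕ := d0.filter fun i : Fin n => (i : ℕ) < k with he0
    set Q : MvPolynomial (Fin n) K := ∑ d ∈ f.support,
      if (d.filter fun i : Fin n => (i : ℕ) < k) = e0 then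
        monomial (d.filter fun i : Fin n => ¬ (i : ℕ) < k) (coeff d f) else 0 with hQdef
    have hQ : ∀ b : Fin n → K, eval b Q = 0 := by
      intro b
      set g : Fin n → MvPolynomial (Fin n) K :=
        fun i => if (i : ℕ) < k then X i else C (b i) with hgdef
      set a : Fin n → K := fun i => if (i : ℕ) < k then 0 else b i with hadef
      have hfa : f ∈ maxIdeal K (Fin n) a ^ μ :=
        h a (fun i hi => by simp [hadef, hi]) hf
      have hmap : (maxIdeal K (Fin n) a).map (aeval g) ≤ J K n k := by
        rw [maxIdeal, Ideal.map_span]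
        apply Ideal.span_le.mpr
        rintro x ⟨y, ⟨i, rfl⟩, rfl⟩
        by_cases hi : (i : ℕ) < k
        · have : aeval g (X i - C (a i)) = X i := by
            simp [hgdef, hadef, hi]
          rw [this]
          exact Ideal.subset_span ⟨i, hi, rfl⟩
        · have : aeval g (X i - C (a i)) = 0 := by
            simp [hgdef, hadef, hi]
          rw [this]
          exact Ideal.zero_mem _
      have hmem : aeval g f ∈ (J K n k) ^ μ := by
        have h1 : aeval g f ∈ (maxIdeal K (Fin n) a ^ μ).map (aeval g) :=
          Ideal.mem_map_of_mem _ hfa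
        rw [Ideal.map_pow] at h1
        exact Ideal.pow_right_mono hmap μ h1
      have hcoeff : coeff e0 (aeval g f) = 0 := by
        by_contra hne
        have hwle := mem_J_pow_weight hmem e0 (mem_support_iff.mpr hne)
        rw [he0, w_filter] at hwle
        omega
      calc eval b Q = coeff e0 (aeval g f) := by
            conv_rhs => rw [f.as_sum, map_sum, MvPolynomial.coeff_sum]
            rw [hQdef, map_sum]
            refine Finset.sum_congr rfl fun d _ => ?_
            rw [aeval_monomial_split, coeff_monomial]
            by_cases hde : (d.filter fun i : Fin n => (i : ℕ) < k) = e0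
            · rw [if_pos hde, if_pos hde, eval_monomial, eval_monomial, one_mul]
            · rw [if_neg hde, if_neg hde, map_zero]
        _ = 0 := hcoeff
    have hQ0 : Q = 0 := MvPolynomial.funext (by simpa using hQ)
    have hc : coeff (d0.filter fun i : Fin n => ¬ (i : ℕ) < k) Q = coeff d0 f := by
      rw [hQdef, MvPolynomial.coeff_sum]
      rw [Finset.sum_eq_single_of_mem d0 hd0]
      · rw [if_pos rfl, coeff_monomial, if_pos rfl]
      · intro d hd hne
        by_cases hde : (d.filter fun i : Fin n => (i : ℕ) < k) = e0
        · rw [if_pos hde, coeff_monomial]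
          rw [if_neg]
          intro heq
          exact hne (filter_inj hde heq)
        · rw [if_neg hde, coeff_zero]
    rw [hQ0, coeff_zero] at hc
    exact (mem_support_iff.mp hd0) hc.symm
  have : (∑ d ∈ f.support, monomial d (coeff d f)) ∈ (J K n k) ^ μ :=
    Ideal.sum_mem _ fun d hd => monomial_mem_J_pow (coeff d f) (key d hd)
  rwa [← f.as_sum] at this
end

section
/- Let K be a field of characteristic zero, let I be an ideal of K[x_1,…,x_n], let μ ≥ 1 be a natural number, and let 0 ≤ i ≤ μ−1. Then for every point a ∈ K^n, I ⊆ m_a^μ if and only if D^i(I) ⊆ m_a^{μ−i}. Equivalently, supp(I,μ) = supp(D^i(I), μ−i). -/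
/-- The derivative ideal `D(I)`: generated by all elements of `I` together with all
their first partial derivatives. -/
noncomputable def derivIdeal {K : Type*} [Field K] {σ : Type*}
    (I : Ideal (MvPolynomial σ K)) : Ideal (MvPolynomial σ K) :=
  Ideal.span ((I : Set (MvPolynomial σ K)) ∪
    {g | ∃ f ∈ I, ∃ j : σ, g = MvPolynomial.pderiv j f})

/-- The iterated derivative ideal `D^i(I)`. -/
noncomputable def derivIdealIter {K : Type*} [Field K] {σ : Type*}
    (i : ℕ) (I : Ideal (MvPolynomial σ K)) : Ideal (MvPolynomial σ K) :=
  derivIdeal^[i] I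

open MvPolynomial

section Coeff

lemma coeff_pderiv' {σ K : Type*} [CommSemiring K] (j : σ) (d : σ →₀ ℕ) (f : MvPolynomial σ K) :
    MvPolynomial.coeff d (MvPolynomial.pderiv j f)
      = (d j + 1 : ℕ) * MvPolynomial.coeff (d + Finsupp.single j 1) f := by
  classical
  induction f using MvPolynomial.induction_on' with
  | add p q hp hq => simp [hp, hq, mul_add]
  | monomial s a =>
    rw [MvPolynomial.pderiv_monomial, MvPolynomial.coeff_monomial, MvPolynomial.coeff_monomial]
    split_ifs with h1 h2 h2
    · subst h2
      simp only [Finsupp.add_apply, Finsupp.single_apply, if_pos rfl]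
      push_cast; ring
    · have hsj : s j = 0 := by
        by_contra hne
        apply h2
        ext i
        have := congrArg (fun t => t i) h1
        simp only [Finsupp.tsub_apply, Finsupp.single_apply, Finsupp.add_apply] at this ⊢
        split_ifs at this ⊢ with h <;> [skip; omega]
        subst h; omega
      simp [hsj]
    · exfalso; apply h1
      subst h2
      ext i
      simp only [Finsupp.tsub_apply, Finsupp.single_apply, Finsupp.add_apply]
      split_ifs <;> omega
    · simp

end Coeff

section Monomial

lemma exists_le_sum_eq {σ : Type*} (k : ℕ) (d : σ →₀ ℕ) (h : k ≤ d.sum fun _ e => e) :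
    ∃ s : σ →₀ ℕ, s ≤ d ∧ (s.sum fun _ e => e) = k := by
  classical
  induction k with
  | zero => exact ⟨0, zero_le, by simp⟩
  | succ k ih =>
    obtain ⟨s, hsd, hsum⟩ := ih (le_trans (Nat.le_succ k) h)
    obtain ⟨i, hi⟩ : ∃ i, s i < d i := by
      by_contra hc
      push_neg at hc
      have : s = d := le_antisymm hsd (Finsupp.le_def.mpr hc)
      subst this; omega
    refine ⟨s + Finsupp.single i 1, ?_, ?_⟩
    · rw [Finsupp.le_def]
      intro x
      have := Finsupp.le_def.mp hsd x
      simp only [Finsupp.add_apply, Finsupp.single_apply]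
      split_ifs with hx
      · subst hx; omega
      · omega
    · rw [Finsupp.sum_add_index' (fun _ => rfl) (fun _ _ _ => rfl)]
      simp [hsum]

lemma maxIdeal_zero (K : Type*) [Field K] (σ : Type*) :
    maxIdeal K σ 0 = Ideal.span (Set.range (X : σ → MvPolynomial σ K)) := by
  simp [maxIdeal]

lemma span_X_pow (K : Type*) [Field K] (σ : Type*) (k : ℕ) :
    (Ideal.span (Set.range (X : σ → MvPolynomial σ K))) ^ k
      = Ideal.span ((fun s => monomial s (1 : K)) '' {s | (s.sum fun _ e => e) = k}) := by
  classical
  induction k with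
  | zero =>
    simp only [pow_zero, Ideal.one_eq_top]
    have : {s : σ →₀ ℕ | (s.sum fun _ e => e) = 0} = {0} := by
      ext s
      simp only [Set.mem_setOf_eq, Set.mem_singleton_iff, Finsupp.sum,
        Finset.sum_eq_zero_iff, Finsupp.mem_support_iff]
      constructor
      · intro h; ext i; by_cases hi : s i = 0
        · simpa using hi
        · exact absurd (h i hi) hi
      · rintro rfl; simp
    rw [this]
    simp [Ideal.eq_top_iff_one, Ideal.mem_span_singleton]
  | succ k ih =>
    rw [pow_succ, ih, Ideal.span_mul_span']
    apply le_antisymm <;> rw [Ideal.span_le] <;> intro x hx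
    · -- x ∈ M_{k+1} * range X
      obtain ⟨y, hy, z, hz, rfl⟩ := Set.mem_mul.mp hx
      obtain ⟨s, hs, rfl⟩ := hy
      obtain ⟨i, rfl⟩ := hz
      have : (monomial s (1:K)) * X i = monomial (s + Finsupp.single i 1) 1 := by
        rw [X, monomial_mul, mul_one]
      rw [this]
      apply Ideal.subset_span
      refine ⟨s + Finsupp.single i 1, ?_, rfl⟩
      rw [Set.mem_setOf_eq] at hs
      rw [Set.mem_setOf_eq, Finsupp.sum_add_index' (fun _ => rfl) (fun _ _ _ => rfl)]
      simp [hs]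
    · obtain ⟨s, hs, rfl⟩ := hx
      simp only [Set.mem_setOf_eq] at hs
      obtain ⟨i, hi⟩ : ∃ i, s i ≠ 0 := by
        by_contra hc
        push_neg at hc
        have : s = 0 := Finsupp.ext fun i => hc i
        subst this; simp at hs
      have hdecomp : s = (s - Finsupp.single i 1) + Finsupp.single i 1 := by
        ext x
        simp only [Finsupp.add_apply, Finsupp.tsub_apply, Finsupp.single_apply]
        split_ifs with h
        · subst h; omega
        · omega
      have hsum : ((s - Finsupp.single i 1).sum fun _ e => e) = k := by
        have h2 : (((s - Finsupp.single i 1) + Finsupp.single i 1).sum fun _ e => e)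
            = ((s - Finsupp.single i 1).sum fun _ e => e)
              + ((Finsupp.single i 1).sum fun _ e => e) :=
          Finsupp.sum_add_index' (fun _ => rfl) (fun _ _ _ => rfl)
        rw [← hdecomp, hs] at h2
        simp only [Finsupp.sum_single_index] at h2
        omega
      have : (monomial s (1:K)) = monomial (s - Finsupp.single i 1) 1 * X i := by
        rw [X, monomial_mul, mul_one, ← hdecomp]
      beta_reduce
      rw [this]
      apply Ideal.subset_span
      exact Set.mul_mem_mul ⟨s - Finsupp.single i 1, hsum, rfl⟩ ⟨i, rfl⟩

lemma mem_pow_maxIdeal_zero_iff {K : Type*} [Field K] {σ : Type*} (k : ℕ)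
    (f : MvPolynomial σ K) :
    f ∈ maxIdeal K σ 0 ^ k ↔ ∀ d ∈ f.support, k ≤ d.sum fun _ e => e := by
  rw [maxIdeal_zero, span_X_pow, mem_ideal_span_monomial_image]
  constructor
  · intro h d hd
    obtain ⟨s, hs, hsd⟩ := h d hd
    rw [Set.mem_setOf_eq] at hs
    obtain ⟨t, rfl⟩ := le_iff_exists_add.mp hsd
    rw [Finsupp.sum_add_index' (fun _ => rfl) (fun _ _ _ => rfl)]
    omega
  · intro h d hd
    obtain ⟨s, hsd, hsum⟩ := exists_le_sum_eq k d (h d hd)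
    exact ⟨s, hsum, hsd⟩

end Monomial

section Shift

noncomputable def shiftHom {K : Type*} [CommRing K] {σ : Type*} (a : σ → K) :
    MvPolynomial σ K →ₐ[K] MvPolynomial σ K :=
  MvPolynomial.aeval (fun i => MvPolynomial.X i + MvPolynomial.C (a i))

lemma shiftHom_comp {K : Type*} [CommRing K] {σ : Type*} (a b : σ → K) :
    (shiftHom a).comp (shiftHom b) = shiftHom (a + b) := by
  apply MvPolynomial.algHom_ext
  intro i
  simp [shiftHom, add_assoc]

lemma shiftHom_zero {K : Type*} [CommRing K] {σ : Type*} :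
    (shiftHom (0 : σ → K)) = AlgHom.id K (MvPolynomial σ K) := by
  apply MvPolynomial.algHom_ext
  intro i
  simp [shiftHom]

lemma shiftHom_bijective {K : Type*} [CommRing K] {σ : Type*} (a : σ → K) :
    Function.Bijective (shiftHom a) := by
  have h1 : (shiftHom a).comp (shiftHom (-a)) = AlgHom.id K (MvPolynomial σ K) := by
    rw [shiftHom_comp]; simp [shiftHom_zero]
  have h2 : (shiftHom (-a)).comp (shiftHom a) = AlgHom.id K (MvPolynomial σ K) := by
    rw [shiftHom_comp]; simp [shiftHom_zero]
  constructor
  · intro x y hxy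
    have := congrArg (shiftHom (-a)) hxy
    rwa [← AlgHom.comp_apply, ← AlgHom.comp_apply, h2, AlgHom.id_apply, AlgHom.id_apply] at this
  · intro y
    exact ⟨shiftHom (-a) y, by rw [← AlgHom.comp_apply, h1, AlgHom.id_apply]⟩

lemma pderiv_shiftHom {K : Type*} [CommRing K] {σ : Type*} (a : σ → K) (j : σ)
    (f : MvPolynomial σ K) :
    pderiv j (shiftHom a f) = shiftHom a (pderiv j f) := by
  classical
  induction f using MvPolynomial.induction_on with
  | C c => simp [shiftHom]
  | add p q hp hq => simp [hp, hq]
  | mul_X p i hp =>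
    have hX : shiftHom a (X i) = X i + C (a i) := by simp [shiftHom]
    rw [map_mul, hX, pderiv_mul, hp, pderiv_mul, map_add, map_add, map_mul, map_mul, hX]
    congr 1
    rw [pderiv_C, add_zero]
    by_cases h : i = j
    · subst h; simp
    · simp [pderiv_X_of_ne h]

lemma map_shiftHom_maxIdeal {K : Type*} [Field K] {σ : Type*} (a : σ → K) :
    Ideal.map (shiftHom a) (maxIdeal K σ a) = maxIdeal K σ 0 := by
  rw [maxIdeal, Ideal.map_span, maxIdeal_zero]
  congr 1
  rw [← Set.range_comp]
  have : (⇑(shiftHom a) ∘ fun i => X i - C (a i)) = (X : σ → MvPolynomial σ K) := by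
    funext i
    simp [shiftHom]
  rw [this]

lemma mem_pow_shift_iff {K : Type*} [Field K] {σ : Type*} (a : σ → K) (k : ℕ)
    (f : MvPolynomial σ K) :
    f ∈ maxIdeal K σ a ^ k ↔ ∀ d ∈ (shiftHom a f).support, k ≤ d.sum fun _ e => e := by
  rw [← mem_pow_maxIdeal_zero_iff]
  have hmap : maxIdeal K σ 0 ^ k = Ideal.map (shiftHom a) (maxIdeal K σ a ^ k) := by
    rw [Ideal.map_pow, map_shiftHom_maxIdeal]
  rw [hmap]
  constructor
  · exact fun h => Ideal.mem_map_of_mem _ h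
  · intro h
    obtain ⟨g, hg, hgf⟩ := (Ideal.mem_map_iff_of_surjective _ (shiftHom_bijective a).2).mp h
    rwa [(shiftHom_bijective a).1 hgf] at hg

end Shift

section Derivatives

lemma pderiv_mem_pow {K : Type*} [Field K] {σ : Type*} (a : σ → K) (k : ℕ) (j : σ) :
    ∀ f ∈ maxIdeal K σ a ^ (k + 1), pderiv j f ∈ maxIdeal K σ a ^ k := by
  induction k with
  | zero => intro f _; simp
  | succ k ih =>
    intro f hf
    rw [pow_succ] at hf
    refine Submodule.mul_induction_on hf ?_ ?_
    · intro g hg h hh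
      rw [pderiv_mul]
      refine Ideal.add_mem _ ?_ ?_
      · rw [pow_succ]
        exact Ideal.mul_mem_mul (ih g hg) hh
      · exact Ideal.mul_mem_right _ _ hg
    · intro x y hx hy; rw [map_add]; exact Ideal.add_mem _ hx hy

lemma mem_pow_succ_of_pderiv {K : Type*} [Field K] [CharZero K] {σ : Type*} (a : σ → K)
    (k : ℕ) (f : MvPolynomial σ K)
    (hf : f ∈ maxIdeal K σ a ^ (k + 1))
    (hd : ∀ j, pderiv j f ∈ maxIdeal K σ a ^ (k + 1)) :
    f ∈ maxIdeal K σ a ^ (k + 2) := by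
  classical
  rw [mem_pow_shift_iff] at hf ⊢
  intro d hdsupp
  by_contra hcon
  push_neg at hcon
  have h1 : (d.sum fun _ e => e) = k + 1 := le_antisymm (by omega) (hf d hdsupp)
  obtain ⟨j, hj⟩ : ∃ j, d j ≠ 0 := by
    by_contra hc; push_neg at hc
    have : d = 0 := Finsupp.ext hc
    rw [this] at h1; simp at h1
  have hdj := hd j
  rw [mem_pow_shift_iff] at hdj
  rw [← pderiv_shiftHom] at hdj
  set g := shiftHom a f with hg
  set d' := d - Finsupp.single j 1 with hd'
  have hdec : d' + Finsupp.single j 1 = d := by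
    ext x
    simp only [Finsupp.add_apply, Finsupp.tsub_apply, Finsupp.single_apply, hd']
    split_ifs with h
    · subst h; omega
    · omega
  have hco : MvPolynomial.coeff d' (pderiv j g) = (d' j + 1 : ℕ) * MvPolynomial.coeff d g := by
    rw [coeff_pderiv', hdec]
  have hne : MvPolynomial.coeff d' (pderiv j g) ≠ 0 := by
    rw [hco]
    apply mul_ne_zero
    · exact Nat.cast_ne_zero.mpr (by omega)
    · exact mem_support_iff.mp hdsupp
  have hmem : d' ∈ (pderiv j g).support := mem_support_iff.mpr hne
  have hge := hdj d' hmem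
  have hsum : (d'.sum fun _ e => e) + 1 = (d.sum fun _ e => e) := by
    have h2 : ((d' + Finsupp.single j 1).sum fun _ e => e)
        = (d'.sum fun _ e => e) + ((Finsupp.single j 1).sum fun _ e => e) :=
      Finsupp.sum_add_index' (fun _ => rfl) (fun _ _ _ => rfl)
    rw [hdec] at h2
    simp only [Finsupp.sum_single_index] at h2
    omega
  omega

lemma derivIdeal_le_iff {K : Type*} [Field K] [CharZero K] {σ : Type*} (a : σ → K)
    (k : ℕ) (J : Ideal (MvPolynomial σ K)) :
    J ≤ maxIdeal K σ a ^ (k + 2) ↔ derivIdeal J ≤ maxIdeal K σ a ^ (k + 1) := by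
  constructor
  · intro h
    rw [derivIdeal, Ideal.span_le]
    rintro x (hx | ⟨f, hf, j, rfl⟩)
    · exact Ideal.pow_le_pow_right (by omega) (h hx)
    · exact pderiv_mem_pow a (k + 1) j f (h hf)
  · intro h f hf
    refine mem_pow_succ_of_pderiv a k f ?_ ?_
    · exact h (Ideal.subset_span (Or.inl hf))
    · intro j
      exact h (Ideal.subset_span (Or.inr ⟨f, hf, j, rfl⟩))

end Derivatives

/-- Giraud–Villamayor: in characteristic zero, for `0 ≤ i ≤ μ-1`,
`supp(I,μ) = supp(D^i(I), μ-i)`, i.e. `I ⊆ m_a^μ ↔ D^i(I) ⊆ m_a^{μ-i}` for every point `a`. -/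
theorem supp_derivIdealIter (K : Type*) [Field K] [CharZero K] (n : ℕ)
    (I : Ideal (MvPolynomial (Fin n) K)) (μ i : ℕ) (hμ : 1 ≤ μ) (hi : i ≤ μ - 1)
    (a : Fin n → K) :
    I ≤ maxIdeal K (Fin n) a ^ μ ↔
      derivIdealIter i I ≤ maxIdeal K (Fin n) a ^ (μ - i) := by
  have hiμ : i + 1 ≤ μ := by omega
  clear hi hμ
  induction i with
  | zero => simp [derivIdealIter]
  | succ i ih =>
    have h1 : i + 1 ≤ μ := by omega
    obtain ⟨k, hk⟩ : ∃ k, μ - i = k + 2 := ⟨μ - i - 2, by omega⟩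
    have h2 : μ - (i + 1) = k + 1 := by omega
    have h3 : derivIdealIter (i + 1) I = derivIdeal (derivIdealIter i I) :=
      Function.iterate_succ_apply' derivIdeal i I
    refine (ih h1).trans ?_
    rw [hk, h2, h3]
    exact derivIdeal_le_iff a k (derivIdealIter i I)
end

section
/- Let K be a field of characteristic zero, let I be an ideal of K[x_1,…,x_n], and let μ ≥ 1. Then supp(I,μ) = {a ∈ K^n : f(a) = 0 for all f ∈ D^{μ−1}(I)}, i.e., supp(I,μ) is the common vanishing locus of the ideal D^{μ−1}(I); in particular supp(I,μ) is a Zariski closed subset of K^n. -/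
open MvPolynomial

namespace SuppAux

variable {K : Type*} [Field K] {σ : Type*}

noncomputable def m0 (K : Type*) [Field K] (σ : Type*) : Ideal (MvPolynomial σ K) :=
  Ideal.span (Set.range (X : σ → MvPolynomial σ K))

lemma degree_add (u v : σ →₀ ℕ) : Finsupp.degree (u + v) = Finsupp.degree u + Finsupp.degree v := by
  simp [Finsupp.degree_eq_weight_one, map_add]

lemma degree_single (j : σ) : Finsupp.degree (Finsupp.single j 1) = 1 := by
  classical
  exact Finsupp.degree_single j 1

lemma coeff_pderiv (j : σ) (e : σ →₀ ℕ) (f : MvPolynomial σ K) :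
    coeff e (pderiv j f) = ((e j : K) + 1) * coeff (e + Finsupp.single j 1) f := by
  classical
  induction f using MvPolynomial.induction_on' with
  | monomial u a =>
    rw [pderiv_monomial, coeff_monomial, coeff_monomial]
    by_cases hu : u = e + Finsupp.single j 1
    · subst hu
      have h1 : e + Finsupp.single j 1 - Finsupp.single j 1 = e := by simp
      rw [if_pos h1, if_pos rfl, Finsupp.add_apply, Finsupp.single_eq_same]
      push_cast
      ring
    · rw [if_neg hu, mul_zero]
      by_cases hj : u j = 0
      · by_cases h : u - Finsupp.single j 1 = e
        · rw [if_pos h, hj]; simp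
        · rw [if_neg h]
      · have hle : Finsupp.single j 1 ≤ u := by
          rwa [Finsupp.single_le_iff, Nat.one_le_iff_ne_zero]
        by_cases h : u - Finsupp.single j 1 = e
        · exact absurd (by rw [← h, tsub_add_cancel_of_le hle]) hu
        · rw [if_neg h]
  | add p q hp hq => simp [hp, hq, mul_add]

lemma constantCoeff_of_mem_m0 {f : MvPolynomial σ K} (hf : f ∈ m0 K σ) :
    constantCoeff f = 0 := by
  have : m0 K σ ≤ RingHom.ker (constantCoeff (σ := σ) (R := K)) := by
    rw [m0, Ideal.span_le]
    rintro _ ⟨i, rfl⟩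
    simp [RingHom.mem_ker]
  simpa [RingHom.mem_ker] using this hf

lemma prod_pow_mem (s : Finset σ) (d : σ → ℕ) :
    (∏ i ∈ s, (X i : MvPolynomial σ K) ^ d i) ∈ m0 K σ ^ (∑ i ∈ s, d i) := by
  classical
  induction s using Finset.induction_on with
  | empty => simp
  | @insert a s hi ih =>
    rw [Finset.prod_insert hi, Finset.sum_insert hi, pow_add]
    have hX : (X a : MvPolynomial σ K) ∈ m0 K σ :=
      Ideal.subset_span (Set.mem_range_self a)
    exact Ideal.mul_mem_mul (Ideal.pow_mem_pow hX _) ih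

lemma mem_m0_pow_iff {f : MvPolynomial σ K} {μ : ℕ} :
    f ∈ m0 K σ ^ μ ↔ ∀ d : σ →₀ ℕ, Finsupp.degree d < μ → coeff d f = 0 := by
  classical
  constructor
  · intro hf
    induction μ generalizing f with
    | zero => exact fun d hd => absurd hd (by omega)
    | succ μ ih =>
      rw [pow_succ] at hf
      refine Submodule.mul_induction_on hf ?_ ?_
      · intro g hg h hh d hd
        rw [coeff_mul]
        refine Finset.sum_eq_zero fun p hp => ?_
        rw [Finset.HasAntidiagonal.mem_antidiagonal] at hp
        by_cases hu : Finsupp.degree p.1 < μ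
        · rw [ih hg p.1 hu, zero_mul]
        · have hdeg : Finsupp.degree p.1 + Finsupp.degree p.2 = Finsupp.degree d := by
            rw [← degree_add, hp]
          have h2 : Finsupp.degree p.2 = 0 := by omega
          rw [Finsupp.degree_eq_zero_iff] at h2
          rw [h2]
          have := constantCoeff_of_mem_m0 hh
          rw [show coeff (0 : σ →₀ ℕ) h = constantCoeff h from rfl, this, mul_zero]
      · intro g h hg hh d hd
        rw [coeff_add, hg d hd, hh d hd, add_zero]
  · intro hf
    rw [← support_sum_monomial_coeff f]
    refine Ideal.sum_mem _ fun d hd => ?_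
    have hdeg : μ ≤ Finsupp.degree d := by
      by_contra h
      exact (mem_support_iff.1 hd) (hf d (by omega))
    rw [monomial_eq]
    refine Ideal.mul_mem_left _ _ ?_
    have := prod_pow_mem (K := K) d.support d
    rw [show (∑ i ∈ d.support, d i) = Finsupp.degree d from rfl] at this
    exact Ideal.pow_le_pow_right hdeg (by exact this)


/-- The shift substitution `x_i ↦ x_i + a_i`. -/
noncomputable def τ (a : σ → K) : MvPolynomial σ K →ₐ[K] MvPolynomial σ K :=
  aeval fun i => X i + C (a i)

lemma τ_τ_neg (a : σ → K) (f : MvPolynomial σ K) : τ a (τ (-a) f) = f := by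
  have : (τ a).comp (τ (-a)) = AlgHom.id K (MvPolynomial σ K) := by
    apply MvPolynomial.algHom_ext
    intro i
    simp [τ]
  simpa using congrArg (fun g => g f) this

lemma τ_neg_τ (a : σ → K) (f : MvPolynomial σ K) : τ (-a) (τ a f) = f := by
  have : (τ (-a)).comp (τ a) = AlgHom.id K (MvPolynomial σ K) := by
    apply MvPolynomial.algHom_ext
    intro i
    simp [τ]
  simpa using congrArg (fun g => g f) this

lemma pderiv_τ (a : σ → K) (j : σ) (f : MvPolynomial σ K) :
    pderiv j (τ a f) = τ a (pderiv j f) := by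
  classical
  induction f using MvPolynomial.induction_on with
  | C c => simp [τ]
  | add p q hp hq => simp [hp, hq]
  | mul_X p i hp =>
    have h1 : τ a (X i) = X i + C (a i) := by simp [τ]
    have h2 : (τ a) (pderiv j (X i : MvPolynomial σ K)) = pderiv j (X i) := by
      rcases eq_or_ne j i with h | h
      · subst h; simp [τ]
      · rw [pderiv_X_of_ne (Ne.symm h)]; simp
    simp only [map_mul, map_add, pderiv_mul, pderiv_C, add_zero, hp, h1, h2]

lemma map_τ_maxIdeal (a : σ → K) :
    Ideal.map (τ a : MvPolynomial σ K →+* MvPolynomial σ K) (maxIdeal K σ a) = m0 K σ := by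
  rw [maxIdeal, Ideal.map_span, ← Set.range_comp, m0]
  congr 1
  apply congrArg
  funext i
  simp [τ]

lemma map_τ_neg_m0 (a : σ → K) :
    Ideal.map (τ (-a) : MvPolynomial σ K →+* MvPolynomial σ K) (m0 K σ) = maxIdeal K σ a := by
  rw [m0, Ideal.map_span, ← Set.range_comp, maxIdeal]
  congr 1
  apply congrArg
  funext i
  simp [τ, sub_eq_add_neg]

lemma mem_maxIdeal_pow_iff {a : σ → K} {f : MvPolynomial σ K} {μ : ℕ} :
    f ∈ maxIdeal K σ a ^ μ ↔ τ a f ∈ m0 K σ ^ μ := by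
  constructor
  · intro hf
    have := Ideal.mem_map_of_mem (τ a : MvPolynomial σ K →+* MvPolynomial σ K) hf
    rwa [Ideal.map_pow, map_τ_maxIdeal] at this
  · intro hf
    have := Ideal.mem_map_of_mem (τ (-a) : MvPolynomial σ K →+* MvPolynomial σ K) hf
    rw [Ideal.map_pow, map_τ_neg_m0] at this
    simpa [τ_neg_τ] using this

lemma pderiv_mem_m0_pow {f : MvPolynomial σ K} {μ : ℕ}
    (hf : f ∈ m0 K σ ^ (μ + 1)) (j : σ) : pderiv j f ∈ m0 K σ ^ μ := by
  rw [mem_m0_pow_iff] at hf ⊢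
  intro d hd
  rw [coeff_pderiv, hf _ (by rw [degree_add, degree_single]; omega), mul_zero]

lemma mem_m0_pow_succ [CharZero K] {f : MvPolynomial σ K} {μ : ℕ} (hμ : 1 ≤ μ)
    (h0 : f ∈ m0 K σ ^ μ) (hd : ∀ j, pderiv j f ∈ m0 K σ ^ μ) :
    f ∈ m0 K σ ^ (μ + 1) := by
  classical
  rw [mem_m0_pow_iff]
  intro d hdlt
  by_cases hd0 : d = 0
  · subst hd0
    exact mem_m0_pow_iff.1 h0 0 (by simpa using Nat.lt_of_lt_of_le Nat.zero_lt_one hμ)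
  · obtain ⟨j, hj⟩ : ∃ j, d j ≠ 0 := by
      by_contra h
      push_neg at h
      exact hd0 (Finsupp.ext fun i => h i)
    have hle : Finsupp.single j 1 ≤ d := by
      rwa [Finsupp.single_le_iff, Nat.one_le_iff_ne_zero]
    have hcan : d - Finsupp.single j 1 + Finsupp.single j 1 = d :=
      tsub_add_cancel_of_le hle
    have hdeg : Finsupp.degree (d - Finsupp.single j 1) + 1 = Finsupp.degree d := by
      conv_rhs => rw [← hcan]
      rw [degree_add, degree_single]
    have h1 := mem_m0_pow_iff.1 (hd j) (d - Finsupp.single j 1) (by omega)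
    rw [coeff_pderiv, hcan] at h1
    have h2 : ((((d - Finsupp.single j 1 : σ →₀ ℕ) j : ℕ) : K) + 1) ≠ 0 :=
      Nat.cast_add_one_ne_zero _
    exact (mul_eq_zero.1 h1).resolve_left h2

lemma mem_maxIdeal_pow_succ_iff [CharZero K] {a : σ → K} {f : MvPolynomial σ K} {μ : ℕ}
    (hμ : 1 ≤ μ) :
    f ∈ maxIdeal K σ a ^ (μ + 1) ↔
      f ∈ maxIdeal K σ a ^ μ ∧ ∀ j, pderiv j f ∈ maxIdeal K σ a ^ μ := by
  constructor
  · intro hf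
    refine ⟨Ideal.pow_le_pow_right (by omega) hf, fun j => ?_⟩
    rw [mem_maxIdeal_pow_iff] at hf ⊢
    rw [← pderiv_τ]
    exact pderiv_mem_m0_pow hf j
  · rintro ⟨h0, hdd⟩
    rw [mem_maxIdeal_pow_iff] at h0 ⊢
    refine mem_m0_pow_succ hμ h0 fun j => ?_
    rw [pderiv_τ]
    exact mem_maxIdeal_pow_iff.1 (hdd j)

lemma derivIdeal_le_iff {I J : Ideal (MvPolynomial σ K)} :
    derivIdeal I ≤ J ↔ I ≤ J ∧ ∀ f ∈ I, ∀ j, pderiv j f ∈ J := by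
  rw [derivIdeal, Ideal.span_le, Set.union_subset_iff]
  constructor
  · rintro ⟨h1, h2⟩
    exact ⟨h1, fun f hf j => h2 ⟨f, hf, j, rfl⟩⟩
  · rintro ⟨h1, h2⟩
    exact ⟨h1, by rintro g ⟨f, hf, j, rfl⟩; exact h2 f hf j⟩

lemma key [CharZero K] (a : σ → K) :
    ∀ (μ : ℕ) (I : Ideal (MvPolynomial σ K)),
      I ≤ maxIdeal K σ a ^ (μ + 1) ↔ derivIdealIter μ I ≤ maxIdeal K σ a := by
  intro μ
  induction μ with
  | zero => intro I; simp [derivIdealIter, pow_one]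
  | succ μ ih =>
    intro I
    have h1 : I ≤ maxIdeal K σ a ^ (μ + 2) ↔ derivIdeal I ≤ maxIdeal K σ a ^ (μ + 1) := by
      rw [derivIdeal_le_iff]
      constructor
      · intro h
        exact ⟨fun f hf => ((mem_maxIdeal_pow_succ_iff (by omega)).1 (h hf)).1,
          fun f hf j => ((mem_maxIdeal_pow_succ_iff (by omega)).1 (h hf)).2 j⟩
      · rintro ⟨hI, hD⟩ f hf
        exact (mem_maxIdeal_pow_succ_iff (by omega)).2 ⟨hI hf, fun j => hD f hf j⟩
    rw [h1, ih (derivIdeal I)]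
    have : derivIdealIter μ (derivIdeal I) = derivIdealIter (μ + 1) I := by
      simp [derivIdealIter, Function.iterate_succ_apply]
    rw [this]

lemma constantCoeff_τ (a : σ → K) (f : MvPolynomial σ K) :
    constantCoeff (τ a f) = eval a f := by
  induction f using MvPolynomial.induction_on with
  | C c => simp [τ]
  | add p q hp hq => simp [hp, hq]
  | mul_X p i hp =>
    have h1 : τ a (X i) = X i + C (a i) := by simp [τ]
    rw [map_mul, h1, map_mul, map_add, hp]
    simp

lemma mem_maxIdeal_iff {a : σ → K} {f : MvPolynomial σ K} :
    f ∈ maxIdeal K σ a ↔ eval a f = 0 := by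
  have h := mem_maxIdeal_pow_iff (a := a) (f := f) (μ := 1)
  rw [mem_m0_pow_iff, pow_one] at h
  rw [h, ← constantCoeff_τ a f]
  constructor
  · intro h'
    exact h' 0 (by simp)
  · intro h' d hd
    have : d = 0 := by rwa [Nat.lt_one_iff, Finsupp.degree_eq_zero_iff] at hd
    subst this
    exact h'

end SuppAux

/-- `supp(I,μ)` is the common vanishing locus of `D^{μ-1}(I)`; in particular it is
Zariski closed. -/
theorem supp_eq_zeroLocus_derivIdealIter (K : Type*) [Field K] [CharZero K] (n : ℕ)
    (I : Ideal (MvPolynomial (Fin n) K)) (μ : ℕ) (hμ : 1 ≤ μ) :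
    {a : Fin n → K | I ≤ maxIdeal K (Fin n) a ^ μ} =
      {a : Fin n → K | ∀ f ∈ derivIdealIter (μ - 1) I, MvPolynomial.eval a f = 0} := by
  obtain ⟨ν, rfl⟩ : ∃ ν, μ = ν + 1 := ⟨μ - 1, by omega⟩
  ext a
  simp only [Set.mem_setOf_eq, Nat.add_sub_cancel]
  rw [SuppAux.key a ν I]
  exact ⟨fun h f hf => SuppAux.mem_maxIdeal_iff.1 (h hf),
    fun h f hf => SuppAux.mem_maxIdeal_iff.2 (h f hf)⟩
end

section
/- Let K be a field, let I_1,…,I_m be ideals of K[x_1,…,x_n], let μ_1,…,μ_m be positive integers, set N = μ_1·μ_2·⋯·μ_m, and let a ∈ K^n. Then the ideal I_1^{N/μ_1} + I_2^{N/μ_2} + … + I_m^{N/μ_m} is contained in m_a^N if and only if I_j ⊆ m_a^{μ_j} for every j = 1,…,m. In other words, supp((I_1,μ_1)+…+(I_m,μ_m)) = supp(I_1,μ_1) ∩ … ∩ supp(I_m,μ_m). -/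
open MvPolynomial in
/-- The "grading" map sending `X i` to `C (X i) * T`, recording the degree of each
monomial in the exponent of `T`. -/
noncomputable def tGrade (K : Type*) [Field K] (σ : Type*) :
    MvPolynomial σ K →ₐ[K] Polynomial (MvPolynomial σ K) :=
  MvPolynomial.aeval fun i => Polynomial.C (MvPolynomial.X i) * Polynomial.X

namespace MarkedAux

open MvPolynomial

variable {K : Type*} [Field K] {σ : Type*}

lemma tGrade_X (i : σ) :
    tGrade K σ (X i) = Polynomial.C (X i) * Polynomial.X := by
  simp [tGrade]

lemma eval_one_tGrade (f : MvPolynomial σ K) :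
    Polynomial.eval 1 (tGrade K σ f) = f := by
  induction f using MvPolynomial.induction_on with
  | C c => simp [tGrade, MvPolynomial.algebraMap_eq]
  | add p q hp hq => simp [map_add, hp, hq]
  | mul_X p i hp => simp [map_mul, tGrade_X, hp]

lemma tGrade_injective : Function.Injective (tGrade K σ) := by
  intro f g h
  rw [← eval_one_tGrade (K := K) (σ := σ) f, ← eval_one_tGrade (K := K) (σ := σ) g, h]

lemma tGrade_monomial (d : σ →₀ ℕ) (c : K) :
    tGrade K σ (monomial d c)
      = Polynomial.C (monomial d c) * Polynomial.X ^ (d.sum fun _ e => e) := by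
  classical
  rw [tGrade, aeval_monomial]
  have h1 : (d.prod fun i e => (Polynomial.C (X i : MvPolynomial σ K) * Polynomial.X) ^ e)
      = Polynomial.C (d.prod fun i e => (X i : MvPolynomial σ K) ^ e)
        * Polynomial.X ^ (d.sum fun _ e => e) := by
    rw [Finsupp.prod, Finsupp.prod, Finsupp.sum]
    rw [← Finset.prod_pow_eq_pow_sum, map_prod, ← Finset.prod_mul_distrib]
    apply Finset.prod_congr rfl
    intro i _
    rw [mul_pow, Polynomial.C_pow]
  rw [h1, monomial_eq]
  have halg : (algebraMap K (Polynomial (MvPolynomial σ K))) c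
      = Polynomial.C (MvPolynomial.C c) := rfl
  rw [halg, ← mul_assoc, ← Polynomial.C_mul]

/-- The "origin" maximal ideal, generated by the variables. -/
lemma maxIdeal_zero : maxIdeal K σ 0 = Ideal.span (Set.range (X : σ → MvPolynomial σ K)) := by
  simp [maxIdeal]

lemma prod_pow_mem (s : Finset σ) (d : σ → ℕ) :
    (∏ i ∈ s, (X i : MvPolynomial σ K) ^ d i)
      ∈ (Ideal.span (Set.range (X : σ → MvPolynomial σ K))) ^ (∑ i ∈ s, d i) := by
  classical
  induction s using Finset.induction with
  | empty => simp [Ideal.one_eq_top]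
  | insert _ _ h ih =>
      rw [Finset.prod_insert h, Finset.sum_insert h, pow_add]
      exact Ideal.mul_mem_mul (Ideal.pow_mem_pow (Ideal.subset_span (Set.mem_range_self _)) _) ih

lemma monomial_mem (d : σ →₀ ℕ) (c : K) {N : ℕ} (h : N ≤ d.sum fun _ e => e) :
    monomial d c ∈ (Ideal.span (Set.range (X : σ → MvPolynomial σ K))) ^ N := by
  classical
  apply Ideal.pow_le_pow_right h
  rw [monomial_eq]
  apply Ideal.mul_mem_left
  simpa [Finsupp.prod, Finsupp.sum] using prod_pow_mem (K := K) d.support d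

lemma dvd_of_mem_pow {f : MvPolynomial σ K} {N : ℕ}
    (h : f ∈ (Ideal.span (Set.range (X : σ → MvPolynomial σ K))) ^ N) :
    Polynomial.X ^ N ∣ tGrade K σ f := by
  rw [← Ideal.mem_span_singleton, ← Ideal.span_singleton_pow]
  have h2 : Ideal.map (tGrade K σ) (Ideal.span (Set.range (X : σ → MvPolynomial σ K)))
      ≤ Ideal.span {(Polynomial.X : Polynomial (MvPolynomial σ K))} := by
    rw [Ideal.map_span, Ideal.span_le]
    rintro _ ⟨_, ⟨i, rfl⟩, rfl⟩
    rw [SetLike.mem_coe, Ideal.mem_span_singleton]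
    exact ⟨Polynomial.C (X i), by rw [tGrade_X, mul_comm]⟩
  have h3 := Ideal.mem_map_of_mem (tGrade K σ) h
  rw [Ideal.map_pow] at h3
  exact Ideal.pow_right_mono h2 N h3

lemma mem_pow_of_dvd {f : MvPolynomial σ K} {N : ℕ}
    (h : Polynomial.X ^ N ∣ tGrade K σ f) :
    f ∈ (Ideal.span (Set.range (X : σ → MvPolynomial σ K))) ^ N := by
  classical
  rcases Nat.eq_zero_or_pos N with rfl | hN
  · simp [Ideal.one_eq_top]
  set g : MvPolynomial σ K :=
    ∑ d ∈ f.support.filter (fun d => N ≤ d.sum fun _ e => e), monomial d (coeff d f) with hg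
  have hgmem : g ∈ (Ideal.span (Set.range (X : σ → MvPolynomial σ K))) ^ N :=
    Submodule.sum_mem _ fun d hd => monomial_mem _ _ (Finset.mem_filter.1 hd).2
  have hfg : f - g
      = ∑ d ∈ f.support.filter (fun d => ¬ N ≤ d.sum fun _ e => e), monomial d (coeff d f) := by
    conv_lhs => rw [f.as_sum]
    rw [hg, ← Finset.sum_filter_add_sum_filter_not f.support (fun d => N ≤ d.sum fun _ e => e)]
    ring
  have hdeg : (tGrade K σ (f - g)).degree < (N : ℕ) := by
    rw [hfg, map_sum]
    apply lt_of_le_of_lt (Polynomial.degree_sum_le _ _)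
    rw [Finset.sup_lt_iff (by exact_mod_cast WithBot.bot_lt_coe N)]
    intro d hd
    have hdN : (d.sum fun _ e => e) < N := by
      have := (Finset.mem_filter.1 hd).2
      omega
    calc (tGrade K σ (monomial d (coeff d f))).degree
        ≤ ((d.sum fun _ e => e : ℕ) : WithBot ℕ) := by
          rw [tGrade_monomial]
          exact Polynomial.degree_C_mul_X_pow_le _ _
      _ < (N : ℕ) := by exact_mod_cast hdN
  have hdvd2 : Polynomial.X ^ N ∣ tGrade K σ (f - g) := by
    rw [map_sub]
    exact dvd_sub h (dvd_of_mem_pow hgmem)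
  have hzero : tGrade K σ (f - g) = 0 := by
    apply Polynomial.eq_zero_of_dvd_of_degree_lt hdvd2
    rwa [Polynomial.degree_X_pow]
  have hfg0 : f - g = 0 := tGrade_injective (by rw [hzero, map_zero])
  rw [sub_eq_zero] at hfg0
  rw [hfg0]
  exact hgmem

lemma mem_pow_iff (f : MvPolynomial σ K) (N : ℕ) :
    f ∈ (Ideal.span (Set.range (X : σ → MvPolynomial σ K))) ^ N
      ↔ Polynomial.X ^ N ∣ tGrade K σ f :=
  ⟨dvd_of_mem_pow, mem_pow_of_dvd⟩

lemma ntd_pow {R : Type*} [CommRing R] [IsDomain R] (p : Polynomial R) (hp : p ≠ 0) (k : ℕ) :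
    (p ^ k).natTrailingDegree = k * p.natTrailingDegree := by
  induction k with
  | zero => simp
  | succ k ih =>
      rw [pow_succ, Polynomial.natTrailingDegree_mul (pow_ne_zero _ hp) hp, ih]
      ring

lemma mem_of_pow_mem {f : MvPolynomial σ K} {k μ : ℕ} (hk : 0 < k)
    (h : f ^ k ∈ (Ideal.span (Set.range (X : σ → MvPolynomial σ K))) ^ (k * μ)) :
    f ∈ (Ideal.span (Set.range (X : σ → MvPolynomial σ K))) ^ μ := by
  rcases eq_or_ne f 0 with rfl | hf
  · have : (0 : MvPolynomial σ K) ^ k = 0 := zero_pow hk.ne'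
    exact Submodule.zero_mem _
  rw [mem_pow_iff] at h ⊢
  rw [map_pow] at h
  set p := tGrade K σ f with hp'
  have hp : p ≠ 0 := fun h0 => hf (tGrade_injective (by rw [← hp', h0, map_zero]))
  have hpk : p ^ k ≠ 0 := pow_ne_zero _ hp
  obtain ⟨q, hq⟩ := h
  have hqne : q ≠ 0 := by
    rintro rfl
    rw [mul_zero] at hq
    exact hpk hq
  have h1 : k * μ ≤ (p ^ k).natTrailingDegree := by
    rw [hq, Polynomial.natTrailingDegree_mul (pow_ne_zero _ Polynomial.X_ne_zero) hqne,
      Polynomial.natTrailingDegree_X_pow]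
    exact Nat.le_add_right _ _
  rw [ntd_pow p hp k] at h1
  have h2 : μ ≤ p.natTrailingDegree := Nat.le_of_mul_le_mul_left h1 hk
  exact Polynomial.X_pow_dvd_iff.2 fun d hd =>
    Polynomial.coeff_eq_zero_of_lt_natTrailingDegree (lt_of_lt_of_le hd h2)

/-- Translation by `a`, sending `X i` to `X i + C (a i)`. -/
noncomputable def transl (a : σ → K) : MvPolynomial σ K ≃ₐ[K] MvPolynomial σ K :=
  AlgEquiv.ofAlgHom (aeval fun i => X i + C (a i)) (aeval fun i => X i - C (a i))
    (by ext i; simp [MvPolynomial.algebraMap_eq])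
    (by ext i; simp [MvPolynomial.algebraMap_eq])

lemma map_transl (a : σ → K) :
    Ideal.map (transl a : MvPolynomial σ K →+* MvPolynomial σ K) (maxIdeal K σ a)
      = Ideal.span (Set.range (X : σ → MvPolynomial σ K)) := by
  have hc : (⇑(transl a : MvPolynomial σ K →+* MvPolynomial σ K))
      ∘ (fun i => (X i : MvPolynomial σ K) - C (a i)) = X := by
    funext i
    show transl a (X i - C (a i)) = X i
    simp [transl, MvPolynomial.algebraMap_eq]
  rw [maxIdeal, Ideal.map_span, ← Set.range_comp, hc]

lemma mem_maxIdeal_pow_of_pow_mem {a : σ → K} {f : MvPolynomial σ K} {k μ : ℕ} (hk : 0 < k)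
    (h : f ^ k ∈ maxIdeal K σ a ^ (k * μ)) : f ∈ maxIdeal K σ a ^ μ := by
  have hmap : ∀ s : ℕ,
      Ideal.map (transl a : MvPolynomial σ K →+* MvPolynomial σ K) (maxIdeal K σ a ^ s)
        = (Ideal.span (Set.range (X : σ → MvPolynomial σ K))) ^ s := fun s => by
    rw [Ideal.map_pow, map_transl]
  have h1 : (transl a f) ^ k
      ∈ (Ideal.span (Set.range (X : σ → MvPolynomial σ K))) ^ (k * μ) := by
    rw [← hmap]
    have := Ideal.mem_map_of_mem (transl a : MvPolynomial σ K →+* MvPolynomial σ K) h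
    rwa [map_pow] at this
  have h2 := mem_of_pow_mem hk h1
  rw [← hmap μ] at h2
  have h3 := Ideal.comap_map_of_bijective
    (transl a : MvPolynomial σ K →+* MvPolynomial σ K)
    (transl a).bijective (I := maxIdeal K σ a ^ μ)
  rw [← h3]
  exact h2

lemma single_le_sum_ideal {m : ℕ} {R : Type*} [CommRing R] (F : Fin m → Ideal R) (j : Fin m) :
    F j ≤ ∑ i, F i := by
  classical
  rw [← Finset.add_sum_erase Finset.univ F (Finset.mem_univ j), Submodule.add_eq_sup]
  exact le_sup_left

lemma sum_ideal_le {m : ℕ} {R : Type*} [CommRing R] (F : Fin m → Ideal R) (J : Ideal R)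
    (h : ∀ j, F j ≤ J) : ∑ j, F j ≤ J := by
  classical
  have : ∀ s : Finset (Fin m), ∑ j ∈ s, F j ≤ J := by
    intro s
    induction s using Finset.induction with
    | empty => simpa using bot_le
    | insert _ _ hs ih =>
        rw [Finset.sum_insert hs, Submodule.add_eq_sup]
        exact sup_le (h _) ih
  exact this Finset.univ

end MarkedAux

/-- The support of the sum of marked ideals `(I_1,μ_1)+…+(I_m,μ_m)`, namely of
`(I_1^{N/μ_1}+…+I_m^{N/μ_m}, N)` with `N = μ_1⋯μ_m`, is the intersection of the supports
of the `(I_j, μ_j)`. -/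
theorem supp_sum_markedIdeals (K : Type*) [Field K] (n m : ℕ)
    (I : Fin m → Ideal (MvPolynomial (Fin n) K)) (μ : Fin m → ℕ)
    (hμ : ∀ j, 0 < μ j) (N : ℕ) (hN : N = ∏ j, μ j) (a : Fin n → K) :
    (∑ j, (I j) ^ (N / μ j)) ≤ maxIdeal K (Fin n) a ^ N ↔
      ∀ j, I j ≤ maxIdeal K (Fin n) a ^ (μ j) := by
  have hNpos : 0 < N := hN ▸ Finset.prod_pos fun j _ => hμ j
  have hdvd : ∀ j, μ j ∣ N := fun j => hN ▸ Finset.dvd_prod_of_mem μ (Finset.mem_univ j)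
  constructor
  · intro h j f hf
    have hk : 0 < N / μ j := Nat.div_pos (Nat.le_of_dvd hNpos (hdvd j)) (hμ j)
    have hkey : f ^ (N / μ j) ∈ maxIdeal K (Fin n) a ^ ((N / μ j) * (μ j)) := by
      rw [Nat.div_mul_cancel (hdvd j)]
      exact h (MarkedAux.single_le_sum_ideal (fun i => (I i) ^ (N / μ i)) j
        (Ideal.pow_mem_pow hf _))
    exact MarkedAux.mem_maxIdeal_pow_of_pow_mem hk hkey
  · intro h
    apply MarkedAux.sum_ideal_le
    intro j
    calc (I j) ^ (N / μ j) ≤ (maxIdeal K (Fin n) a ^ (μ j)) ^ (N / μ j) :=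
          Ideal.pow_right_mono (h j) _
      _ = maxIdeal K (Fin n) a ^ N := by
          rw [← pow_mul, Nat.mul_div_cancel' (hdvd j)]
end

section
/- Let K be a field of characteristic zero, let I be an ideal of K[x_1,…,x_n], and let μ ≥ 1. Define the coefficient ideal C(I,μ) := Σ_{i=0}^{μ−1} (D^i(I))^{μ!/(μ−i)} (note μ−i divides μ! for 0 ≤ i ≤ μ−1). Then for every point a ∈ K^n, C(I,μ) ⊆ m_a^{μ!} if and only if I ⊆ m_a^μ; that is, the coefficient ideal, with mark μ!, has the same support as (I,μ). -/
/-- The coefficient ideal `C(I,μ) = Σ_{i=0}^{μ-1} (D^i(I))^{μ!/(μ-i)}`. -/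
noncomputable def coeffIdeal {K : Type*} [Field K] {σ : Type*}
    (μ : ℕ) (I : Ideal (MvPolynomial σ K)) : Ideal (MvPolynomial σ K) :=
  ∑ i ∈ Finset.range μ, (derivIdealIter i I) ^ (Nat.factorial μ / (μ - i))

open MvPolynomial


open MvPolynomial

section Deg

variable {σ : Type*}

lemma deg_add (a b : σ →₀ ℕ) : (a + b).degree = a.degree + b.degree := by
  simp [Finsupp.degree_eq_weight_one, map_add]

lemma deg_single (j : σ) (k : ℕ) : (Finsupp.single j k).degree = k := by
  classical
  rcases eq_or_ne k 0 with rfl | hk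
  · simp
  · rw [Finsupp.degree_apply, Finsupp.support_single_ne_zero _ hk]
    simp

end Deg

section Char

variable {K : Type*} [Field K] {σ : Type*}

/-- The ideal of polynomials all of whose monomials have degree ≥ N. -/
noncomputable def lowVanish (K : Type*) [Field K] (σ : Type*) (N : ℕ) :
    Ideal (MvPolynomial σ K) where
  carrier := {f | ∀ m ∈ f.support, N ≤ Finsupp.degree m}
  zero_mem' := by simp
  add_mem' := by
    intro f g hf hg m hm
    classical
    rcases Finset.mem_union.mp (Finsupp.support_add hm) with h | h
    · exact hf m h
    · exact hg m h
  smul_mem' := by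
    intro g f hf m hm
    classical
    rw [smul_eq_mul] at hm
    obtain ⟨m1, hm1, m2, hm2, rfl⟩ := Finset.mem_add.mp (MvPolynomial.support_mul g f hm)
    calc N ≤ Finsupp.degree m2 := hf m2 hm2
    _ ≤ Finsupp.degree m1 + Finsupp.degree m2 := Nat.le_add_left _ _
    _ = (m1 + m2).degree := (deg_add m1 m2).symm

lemma mem_lowVanish_iff {N : ℕ} {f : MvPolynomial σ K} :
    f ∈ lowVanish K σ N ↔ ∀ m ∈ f.support, N ≤ Finsupp.degree m := Iff.rfl

lemma span_X_le_lowVanish : Ideal.span (Set.range (X : σ → MvPolynomial σ K)) ≤ lowVanish K σ 1 := by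
  rw [Ideal.span_le]
  rintro _ ⟨i, rfl⟩ m hm
  classical
  rw [MvPolynomial.support_X, Finset.mem_singleton] at hm
  subst hm
  rw [deg_single]

lemma pow_le_lowVanish (N : ℕ) :
    (Ideal.span (Set.range (X : σ → MvPolynomial σ K))) ^ N ≤ lowVanish K σ N := by
  induction N with
  | zero => intro f _ m _; exact Nat.zero_le _
  | succ N ih =>
    rw [pow_succ]
    refine Ideal.mul_le.mpr fun f hf g hg m hm => ?_
    classical
    obtain ⟨m1, hm1, m2, hm2, rfl⟩ := Finset.mem_add.mp (MvPolynomial.support_mul f g hm)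
    rw [deg_add]
    exact Nat.add_le_add (ih hf m1 hm1) (span_X_le_lowVanish hg m2 hm2)

lemma prod_X_pow_mem (m : σ →₀ ℕ) (s : Finset σ) :
    (∏ i ∈ s, (X i : MvPolynomial σ K) ^ m i) ∈
      (Ideal.span (Set.range (X : σ → MvPolynomial σ K))) ^ (∑ i ∈ s, m i) := by
  classical
  induction s using Finset.induction with
  | empty => simp
  | @insert a s ha ih =>
    rw [Finset.prod_insert ha, Finset.sum_insert ha, pow_add]
    exact Ideal.mul_mem_mul (Ideal.pow_mem_pow (Ideal.subset_span (Set.mem_range_self a)) _) ih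

lemma monomial_mem_pow {m : σ →₀ ℕ} {N : ℕ} (b : K) (h : N ≤ Finsupp.degree m) :
    monomial m b ∈ (Ideal.span (Set.range (X : σ → MvPolynomial σ K))) ^ N := by
  rw [monomial_eq]
  refine Ideal.mul_mem_left _ _ ?_
  refine Ideal.pow_le_pow_right h ?_
  exact prod_X_pow_mem m m.support

/-- Membership in the `N`-th power of the maximal ideal at the origin. -/
lemma mem_pow_span_X_iff {N : ℕ} {f : MvPolynomial σ K} :
    f ∈ (Ideal.span (Set.range (X : σ → MvPolynomial σ K))) ^ N ↔
      ∀ m ∈ f.support, N ≤ Finsupp.degree m := by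
  constructor
  · exact fun h => pow_le_lowVanish N h
  · intro h
    rw [← MvPolynomial.support_sum_monomial_coeff f]
    exact Ideal.sum_mem _ fun m hm => monomial_mem_pow _ (h m hm)

lemma pderiv_mem_pow_s6 {N : ℕ} {f : MvPolynomial σ K}
    (h : f ∈ (Ideal.span (Set.range (X : σ → MvPolynomial σ K))) ^ (N + 1)) (j : σ) :
    pderiv j f ∈ (Ideal.span (Set.range (X : σ → MvPolynomial σ K))) ^ N := by
  classical
  rw [mem_pow_span_X_iff] at h
  have hf : pderiv j f = ∑ m ∈ f.support, pderiv j (monomial m (MvPolynomial.coeff m f)) := by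
    conv_lhs => rw [← MvPolynomial.support_sum_monomial_coeff f]
    rw [map_sum]
  rw [hf]
  refine Ideal.sum_mem _ fun m hm => ?_
  rw [pderiv_monomial]
  rcases eq_or_ne (m j) 0 with hj | hj
  · rw [hj]; simp
  · refine monomial_mem_pow _ ?_
    have hle : Finsupp.single j 1 ≤ m := by
      rw [Finsupp.single_le_iff]
      omega
    have hsum : (m - Finsupp.single j 1) + Finsupp.single j 1 = m :=
      tsub_add_cancel_of_le hle
    have := h m hm
    have hdeg : (m - Finsupp.single j 1).degree + 1 = m.degree := by
      conv_rhs => rw [← hsum]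
      rw [deg_add, deg_single]
    omega

end Char


open MvPolynomial

section Psi

variable {K : Type*} [Field K] {σ : Type*}

/-- Substitution `X i ↦ c i • t` into a single-variable polynomial ring. -/
noncomputable def psiSub (c : σ → K) : MvPolynomial σ K →ₐ[K] Polynomial K :=
  aeval (fun i => Polynomial.C (c i) * Polynomial.X)

lemma psiSub_monomial (c : σ → K) (m : σ →₀ ℕ) (b : K) :
    psiSub c (monomial m b) =
      Polynomial.C (b * m.prod fun i e => c i ^ e) * Polynomial.X ^ m.degree := by
  classical
  rw [monomial_eq, map_mul, psiSub]
  rw [show (aeval fun i => Polynomial.C (c i) * Polynomial.X) (C b : MvPolynomial σ K)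
      = Polynomial.C b from aeval_C _ _]
  rw [Finsupp.prod, map_prod]
  simp_rw [map_pow, aeval_X, mul_pow, ← Polynomial.C_pow]
  rw [Finset.prod_mul_distrib, Finset.prod_pow_eq_pow_sum,
    ← map_prod (Polynomial.C : K →+* Polynomial K) (fun x => c x ^ m x) m.support]
  rw [Finsupp.prod, Finsupp.degree_apply, map_mul]
  ring

lemma coeff_psiSub (c : σ → K) (f : MvPolynomial σ K) (e : ℕ) :
    (psiSub c f).coeff e =
      ∑ m ∈ f.support.filter (fun m => Finsupp.degree m = e),
        f.coeff m * m.prod fun i k => c i ^ k := by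
  classical
  conv_lhs => rw [← MvPolynomial.support_sum_monomial_coeff f, map_sum,
    Polynomial.finset_sum_coeff]
  rw [Finset.sum_filter]
  refine Finset.sum_congr rfl fun m hm => ?_
  rw [psiSub_monomial, Polynomial.coeff_C_mul, Polynomial.coeff_X_pow]
  split_ifs with h1 h2 h2
  · rw [mul_one]
  · exact absurd h1.symm h2
  · exact absurd h2.symm h1
  · rw [mul_zero]

lemma coeff_psiSub_eq_zero {c : σ → K} {f : MvPolynomial σ K} {N e : ℕ}
    (h : ∀ m ∈ f.support, N ≤ Finsupp.degree m) (he : e < N) :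
    (psiSub c f).coeff e = 0 := by
  classical
  rw [coeff_psiSub]
  refine Finset.sum_eq_zero fun m hm => ?_
  rcases Finset.mem_filter.mp hm with ⟨hm1, hm2⟩
  exact absurd (h m hm1) (by omega)

lemma natTrailingDegree_pow {p : Polynomial K} (hp : p ≠ 0) (k : ℕ) :
    (p ^ k).natTrailingDegree = k * p.natTrailingDegree := by
  induction k with
  | zero => simp
  | succ k ih =>
    rw [pow_succ, Polynomial.natTrailingDegree_mul (pow_ne_zero k hp) hp, ih]
    ring

end Psi

section SumIdeal

variable {R : Type*} [CommRing R]

lemma ideal_sum_le {ι : Type*} (s : Finset ι) (f : ι → Ideal R) {P : Ideal R}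
    (h : ∀ i ∈ s, f i ≤ P) : ∑ i ∈ s, f i ≤ P :=
  Finset.sum_induction f (· ≤ P)
    (fun a b ha hb => by rw [Submodule.add_eq_sup]; exact sup_le ha hb)
    bot_le h

lemma ideal_le_sum {ι : Type*} (s : Finset ι) (f : ι → Ideal R) {i : ι} (hi : i ∈ s) :
    f i ≤ ∑ j ∈ s, f j := by
  classical
  rw [← Finset.add_sum_erase _ f hi, Submodule.add_eq_sup]
  exact le_sup_left

end SumIdeal

section Main0

variable {K : Type*} [Field K] {σ : Type*}

lemma derivIdeal_le {I : Ideal (MvPolynomial σ K)} {N : ℕ}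
    (h : I ≤ (Ideal.span (Set.range (X : σ → MvPolynomial σ K))) ^ (N + 1)) :
    derivIdeal I ≤ (Ideal.span (Set.range (X : σ → MvPolynomial σ K))) ^ N := by
  rw [derivIdeal, Ideal.span_le]
  rintro g (hg | ⟨f, hf, j, rfl⟩)
  · exact Ideal.pow_le_pow_right (Nat.le_succ N) (h hg)
  · exact pderiv_mem_pow_s6 (h hf) j

lemma derivIdealIter_le {I : Ideal (MvPolynomial σ K)} {μ : ℕ}
    (h : I ≤ (Ideal.span (Set.range (X : σ → MvPolynomial σ K))) ^ μ)
    {i : ℕ} (hi : i ≤ μ) :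
    derivIdealIter i I ≤ (Ideal.span (Set.range (X : σ → MvPolynomial σ K))) ^ (μ - i) := by
  induction i with
  | zero => simpa [derivIdealIter] using h
  | succ i ih =>
    rw [derivIdealIter, Function.iterate_succ_apply']
    have h1 : derivIdeal^[i] I ≤
        (Ideal.span (Set.range (X : σ → MvPolynomial σ K))) ^ ((μ - (i + 1)) + 1) := by
      have := ih (Nat.le_of_succ_le hi)
      rw [derivIdealIter] at this
      have he : μ - i = (μ - (i + 1)) + 1 := by omega
      rwa [he] at this
    exact derivIdeal_le h1

theorem main0 [Infinite K] (J : Ideal (MvPolynomial σ K)) (μ : ℕ) (hμ : 1 ≤ μ) :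
    coeffIdeal μ J ≤ (Ideal.span (Set.range (X : σ → MvPolynomial σ K))) ^ (Nat.factorial μ) ↔
      J ≤ (Ideal.span (Set.range (X : σ → MvPolynomial σ K))) ^ μ := by
  set M := Ideal.span (Set.range (X : σ → MvPolynomial σ K)) with hM
  constructor
  · intro h
    -- extract the `i = 0` term
    have h0 : J ^ (Nat.factorial μ / μ) ≤ M ^ (Nat.factorial μ) := by
      refine le_trans ?_ h
      have := ideal_le_sum (Finset.range μ)
        (fun i => (derivIdealIter i J) ^ (Nat.factorial μ / (μ - i)))
        (i := 0) (by simpa using Nat.lt_of_lt_of_le Nat.zero_lt_one hμ)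
      simpa [coeffIdeal, derivIdealIter] using this
    set k := Nat.factorial μ / μ with hk
    have hdvd : μ ∣ Nat.factorial μ := Nat.dvd_factorial hμ le_rfl
    have hfac : μ * k = Nat.factorial μ := Nat.mul_div_cancel' hdvd
    have hkpos : 0 < k := by
      rcases Nat.eq_zero_or_pos k with h' | h'
      · rw [h', Nat.mul_zero] at hfac
        have := Nat.factorial_pos μ
        omega
      · exact h'
    intro f hf
    have hfk : f ^ k ∈ M ^ (Nat.factorial μ) := h0 (Ideal.pow_mem_pow hf k)
    rw [hM, mem_pow_span_X_iff] at hfk ⊢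
    by_contra hcon
    push_neg at hcon
    obtain ⟨m0, hm0, hm0d⟩ := hcon
    classical
    have hfne : f ≠ 0 := fun h0' => by simp [h0'] at hm0
    have hDne : (f.support.image Finsupp.degree).Nonempty :=
      ⟨Finsupp.degree m0, Finset.mem_image_of_mem _ hm0⟩
    set d := (f.support.image Finsupp.degree).min' hDne with hd
    have hdlt : d < μ :=
      lt_of_le_of_lt (Finset.min'_le _ _ (Finset.mem_image_of_mem _ hm0)) hm0d
    have hlow : ∀ m ∈ f.support, d ≤ Finsupp.degree m :=
      fun m hm => Finset.min'_le _ _ (Finset.mem_image_of_mem _ hm)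
    obtain ⟨m1, hm1, hm1d⟩ := Finset.mem_image.mp (Finset.min'_mem _ hDne)
    -- the lowest homogeneous slice of `f`
    set P : MvPolynomial σ K :=
      ∑ m ∈ f.support.filter (fun m => Finsupp.degree m = d),
        monomial m (f.coeff m) with hP
    have hPcoeff : P.coeff m1 = f.coeff m1 := by
      rw [hP, MvPolynomial.coeff_sum]
      rw [Finset.sum_eq_single m1]
      · rw [MvPolynomial.coeff_monomial, if_pos rfl]
      · intro m hm hne
        rw [MvPolynomial.coeff_monomial, if_neg hne]
      · intro hnm
        exact absurd (Finset.mem_filter.mpr ⟨hm1, hm1d⟩) hnm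
    have hPne : P ≠ 0 := by
      intro h0'
      have : f.coeff m1 = 0 := by rw [← hPcoeff, h0', MvPolynomial.coeff_zero]
      exact (MvPolynomial.mem_support_iff.mp hm1) this
    -- choose a good direction
    obtain ⟨c, hc⟩ : ∃ c : σ → K, eval c P ≠ 0 := by
      by_contra hcn
      push_neg at hcn
      exact hPne (MvPolynomial.funext fun x => by rw [hcn x, map_zero])
    have hevalP : eval c P =
        ∑ m ∈ f.support.filter (fun m => Finsupp.degree m = d),
          f.coeff m * m.prod fun i k => c i ^ k := by
      rw [hP, map_sum]
      exact Finset.sum_congr rfl fun m _ => MvPolynomial.eval_monomial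
    set p := psiSub c f with hp
    have hpd : p.coeff d ≠ 0 := by
      rw [hp, coeff_psiSub, ← hevalP]
      exact hc
    have hpne : p ≠ 0 := fun h0' => hpd (by rw [h0', Polynomial.coeff_zero])
    have hntd : p.natTrailingDegree = d :=
      le_antisymm (Polynomial.natTrailingDegree_le_of_ne_zero hpd)
        (Polynomial.le_natTrailingDegree hpne fun e he =>
          coeff_psiSub_eq_zero hlow he)
    have hpkne : p ^ k ≠ 0 := pow_ne_zero k hpne
    have hcoeffkd : (p ^ k).coeff (k * d) ≠ 0 := by
      have h1 : (p ^ k).natTrailingDegree = k * d := by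
        rw [natTrailingDegree_pow hpne, hntd]
      have := Polynomial.trailingCoeff_nonzero_iff_nonzero.mpr hpkne
      rwa [Polynomial.trailingCoeff, h1] at this
    have hzero : (p ^ k).coeff (k * d) = 0 := by
      have hψ : p ^ k = psiSub c (f ^ k) := by rw [hp, map_pow]
      rw [hψ]
      refine coeff_psiSub_eq_zero hfk ?_
      calc k * d < k * μ := Nat.mul_lt_mul_of_pos_left hdlt hkpos
      _ = μ * k := Nat.mul_comm k μ
      _ = Nat.factorial μ := hfac
    exact hcoeffkd hzero
  · intro h
    rw [coeffIdeal]
    refine ideal_sum_le _ _ fun i hi => ?_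
    rw [Finset.mem_range] at hi
    have h1 : derivIdealIter i J ≤ M ^ (μ - i) := derivIdealIter_le h (Nat.le_of_lt hi)
    have hdvd : (μ - i) ∣ Nat.factorial μ := Nat.dvd_factorial (by omega) (by omega)
    calc (derivIdealIter i J) ^ (Nat.factorial μ / (μ - i))
        ≤ (M ^ (μ - i)) ^ (Nat.factorial μ / (μ - i)) := Ideal.pow_right_mono h1 _
    _ = M ^ ((μ - i) * (Nat.factorial μ / (μ - i))) := (pow_mul M _ _).symm
    _ = M ^ (Nat.factorial μ) := by rw [Nat.mul_div_cancel' hdvd]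

end Main0


open MvPolynomial

section Shift

variable {K : Type*} [Field K] {σ : Type*}

/-- Translation `X i ↦ X i + a i`, as an algebra automorphism. -/
noncomputable def shiftE (a : σ → K) : MvPolynomial σ K ≃ₐ[K] MvPolynomial σ K :=
  AlgEquiv.ofAlgHom (aeval fun i => X i + C (a i)) (aeval fun i => X i - C (a i))
    (by ext i; simp) (by ext i; simp)

lemma shiftE_pderiv (a : σ → K) (j : σ) (f : MvPolynomial σ K) :
    pderiv j (shiftE a f) = shiftE a (pderiv j f) := by
  classical
  induction f using MvPolynomial.induction_on with
  | C c => simp [shiftE]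
  | add p q hp hq => simp [map_add, hp, hq]
  | mul_X p i hp =>
    have hX : shiftE a (X i) = X i + C (a i) := by simp [shiftE]
    have hx : pderiv j ((shiftE a) (X i)) = shiftE a (pderiv j (X i)) := by
      by_cases h : i = j
      · subst h
        rw [hX, map_add, pderiv_X_self, map_one]
        simp
      · rw [hX]
        simp [pderiv_X_of_ne (h : i ≠ j), pderiv_C]
    rw [map_mul, pderiv_mul, pderiv_mul, map_add, map_mul, map_mul, hp, hx]

end Shift

section MapEquiv

lemma map_le_map_iff {R S : Type*} [Semiring R] [Semiring S] {E : Type*}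
    [EquivLike E R S] [RingEquivClass E R S] (e : E) {I J : Ideal R} :
    Ideal.map e I ≤ Ideal.map e J ↔ I ≤ J := by
  constructor
  · intro h x hx
    obtain ⟨y, hy, hxy⟩ := (Ideal.mem_map_of_equiv e (e x)).mp (h (Ideal.mem_map_of_mem e hx))
    have hyx : y = x := EquivLike.injective e hxy
    rwa [← hyx]
  · exact Ideal.map_mono

lemma ideal_map_sum {R S : Type*} [Semiring R] [Semiring S] {F : Type*}
    [FunLike F R S] [RingHomClass F R S] (f : F) {ι : Type*} (s : Finset ι)
    (g : ι → Ideal R) :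
    Ideal.map f (∑ i ∈ s, g i) = ∑ i ∈ s, Ideal.map f (g i) := by
  classical
  induction s using Finset.induction with
  | empty => simp
  | @insert a s ha ih =>
    rw [Finset.sum_insert ha, Finset.sum_insert ha, Submodule.add_eq_sup,
      Submodule.add_eq_sup, Ideal.map_sup, ih]

end MapEquiv

section ShiftMap

variable {K : Type*} [Field K] {σ : Type*}

lemma map_shiftE_maxIdeal (a : σ → K) :
    Ideal.map (shiftE a) (maxIdeal K σ a) =
      Ideal.span (Set.range (X : σ → MvPolynomial σ K)) := by
  rw [maxIdeal, Ideal.map_span, ← Set.range_comp]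
  have hr : ((shiftE a) ∘ fun i => X i - C (a i)) = (X : σ → MvPolynomial σ K) := by
    funext i
    simp [shiftE]
  rw [hr]

lemma map_shiftE_derivIdeal (a : σ → K) (I : Ideal (MvPolynomial σ K)) :
    Ideal.map (shiftE a) (derivIdeal I) = derivIdeal (Ideal.map (shiftE a) I) := by
  apply le_antisymm
  · rw [derivIdeal, Ideal.map_span, Ideal.span_le]
    rintro _ ⟨x, hx, rfl⟩
    rcases hx with hx | ⟨f, hf, j, rfl⟩
    · exact Ideal.subset_span (Or.inl (Ideal.mem_map_of_mem _ hx))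
    · refine Ideal.subset_span (Or.inr ⟨shiftE a f, Ideal.mem_map_of_mem _ hf, j, ?_⟩)
      rw [shiftE_pderiv]
  · rw [derivIdeal, Ideal.span_le]
    rintro g (hg | ⟨f, hf, j, rfl⟩)
    · refine Ideal.map_mono (fun x hx => ?_) hg
      exact Ideal.subset_span (Or.inl hx)
    · obtain ⟨f0, hf0, rfl⟩ := (Ideal.mem_map_of_equiv (shiftE a) f).mp hf
      rw [shiftE_pderiv]
      exact Ideal.mem_map_of_mem _ (Ideal.subset_span (Or.inr ⟨f0, hf0, j, rfl⟩))

lemma map_shiftE_derivIdealIter (a : σ → K) (i : ℕ) (I : Ideal (MvPolynomial σ K)) :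
    Ideal.map (shiftE a) (derivIdealIter i I) = derivIdealIter i (Ideal.map (shiftE a) I) := by
  induction i with
  | zero => simp [derivIdealIter]
  | succ i ih =>
    have h1 : ∀ J : Ideal (MvPolynomial σ K),
        derivIdealIter (i + 1) J = derivIdeal (derivIdealIter i J) := by
      intro J
      rw [derivIdealIter, Function.iterate_succ_apply']
      rfl
    rw [h1, h1, map_shiftE_derivIdeal, ih]

lemma map_shiftE_coeffIdeal (a : σ → K) (μ : ℕ) (I : Ideal (MvPolynomial σ K)) :
    Ideal.map (shiftE a) (coeffIdeal μ I) = coeffIdeal μ (Ideal.map (shiftE a) I) := by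
  rw [coeffIdeal, coeffIdeal, ideal_map_sum]
  refine Finset.sum_congr rfl fun i _ => ?_
  rw [Ideal.map_pow, map_shiftE_derivIdealIter]

end ShiftMap


/-- The coefficient ideal `C(I,μ)` with mark `μ!` has the same support as `(I,μ)`:
`C(I,μ) ⊆ m_a^{μ!} ↔ I ⊆ m_a^μ` for every point `a`. -/
theorem supp_coeffIdeal (K : Type*) [Field K] [CharZero K] (n : ℕ)
    (I : Ideal (MvPolynomial (Fin n) K)) (μ : ℕ) (hμ : 1 ≤ μ) (a : Fin n → K) :
    coeffIdeal μ I ≤ maxIdeal K (Fin n) a ^ (Nat.factorial μ) ↔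
      I ≤ maxIdeal K (Fin n) a ^ μ := by
  haveI : Infinite K := Infinite.of_injective (Nat.cast : ℕ → K) Nat.cast_injective
  have e1 := map_le_map_iff (shiftE a) (I := coeffIdeal μ I)
    (J := maxIdeal K (Fin n) a ^ (Nat.factorial μ))
  have e2 := map_le_map_iff (shiftE a) (I := I) (J := maxIdeal K (Fin n) a ^ μ)
  rw [← e1, ← e2, Ideal.map_pow, Ideal.map_pow, map_shiftE_maxIdeal,
    map_shiftE_coeffIdeal]
  exact main0 _ μ hμ
end

section
/- Let K be a field and let I ⊆ K[x_1,…,x_n] be the ideal generated by polynomials g_1,…,g_l. Then for every i ≥ 0, the iterated derivative ideal D^i(I) equals the ideal generated by all partial derivatives ∂^α g_j with multi-index |α| ≤ i (including the g_j themselves for α = 0). In particular, D^i(I) admits a generating set of at most (n+1)^i·l polynomials, each of total degree at most max_j deg(g_j). -/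
open MvPolynomial in
lemma totalDegree_pderiv_le' {K σ : Type*} [Field K] (f : MvPolynomial σ K) (j : σ) :
    (pderiv j f).totalDegree ≤ f.totalDegree := by
  classical
  conv_lhs => rw [f.as_sum]
  rw [map_sum]
  refine (totalDegree_finset_sum _ _).trans (Finset.sup_le fun m hm => ?_)
  rw [pderiv_monomial]
  refine (totalDegree_monomial_le _ _).trans (le_trans ?_ (le_totalDegree hm))
  rw [Finsupp.sum_of_support_subset _ Finsupp.support_tsub _ (fun _ _ => rfl), Finsupp.sum]
  exact Finset.sum_le_sum fun x _ => by rw [Finsupp.tsub_apply]; exact tsub_le_self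

/-- `D(span T)` is generated by `T` and the first partial derivatives of elements of `T`. -/
lemma derivIdeal_span {K : Type*} [Field K] {σ : Type*} (T : Set (MvPolynomial σ K)) :
    derivIdeal (Ideal.span T) =
      Ideal.span (T ∪ {g | ∃ f ∈ T, ∃ j : σ, g = MvPolynomial.pderiv j f}) := by
  set S := T ∪ {g | ∃ f ∈ T, ∃ j : σ, g = MvPolynomial.pderiv j f} with hS
  have key : ∀ x ∈ Ideal.span T, ∀ j : σ, MvPolynomial.pderiv j x ∈ Ideal.span S := by
    intro x hx
    refine Submodule.span_induction ?_ ?_ ?_ ?_ hx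
    · intro t ht j
      exact Ideal.subset_span (Or.inr ⟨t, ht, j, rfl⟩)
    · intro j; simp
    · intro a b _ _ ha hb j
      rw [map_add]; exact Ideal.add_mem _ (ha j) (hb j)
    · intro r x hx' hder j
      rw [smul_eq_mul, MvPolynomial.pderiv_mul]
      refine Ideal.add_mem _ (Ideal.mul_mem_left _ _ ?_) (Ideal.mul_mem_left _ _ (hder j))
      exact Ideal.span_mono Set.subset_union_left hx'
  apply le_antisymm
  · rw [derivIdeal, Ideal.span_le]
    rintro x (hx | ⟨f, hf, j, rfl⟩)
    · exact Ideal.span_mono Set.subset_union_left hx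
    · exact key f hf j
  · rw [Ideal.span_le]
    rintro x (hx | ⟨f, hf, j, rfl⟩)
    · exact Ideal.subset_span (Or.inl (Ideal.subset_span hx))
    · exact Ideal.subset_span (Or.inr ⟨f, Ideal.subset_span hf, j, rfl⟩)

/-- If `I = (g_1,…,g_l)` then `D^i(I)` is generated by all partial derivatives of the
`g_j` of order `≤ i`; in particular it admits a generating set of at most `(n+1)^i·l`
polynomials, each of total degree at most `max_j deg(g_j)`. -/
theorem derivIdealIter_span (K : Type*) [Field K] (n l : ℕ)
    (g : Fin l → MvPolynomial (Fin n) K) (I : Ideal (MvPolynomial (Fin n) K))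
    (hI : I = Ideal.span (Set.range g)) (i : ℕ) :
    derivIdealIter i I =
      Ideal.span {p : MvPolynomial (Fin n) K | ∃ j : Fin l, ∃ L : List (Fin n),
        L.length ≤ i ∧ p = L.foldr (fun t q => MvPolynomial.pderiv t q) (g j)} ∧
    ∃ S : Finset (MvPolynomial (Fin n) K),
      S.card ≤ (n + 1) ^ i * l ∧
      (∀ p ∈ S, p.totalDegree ≤ Finset.univ.sup fun j => (g j).totalDegree) ∧
      Ideal.span (S : Set (MvPolynomial (Fin n) K)) = derivIdealIter i I := by
  classical
  set Dset : ℕ → Set (MvPolynomial (Fin n) K) := fun i =>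
    {p | ∃ j : Fin l, ∃ L : List (Fin n),
      L.length ≤ i ∧ p = L.foldr (fun t q => MvPolynomial.pderiv t q) (g j)} with hDset
  -- Part 1
  have part1 : ∀ i : ℕ, derivIdealIter i I = Ideal.span (Dset i) := by
    intro i
    induction i with
    | zero =>
      have : Dset 0 = Set.range g := by
        ext p
        constructor
        · rintro ⟨j, L, hL, rfl⟩
          rw [List.length_eq_zero_iff.mp (Nat.le_zero.mp hL)]
          exact ⟨j, rfl⟩
        · rintro ⟨j, rfl⟩
          exact ⟨j, [], by simp, rfl⟩
      simpa [derivIdealIter, this] using hI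
    | succ i ih =>
      have hset : Dset (i + 1) = Dset i ∪
          {p | ∃ f ∈ Dset i, ∃ j : Fin n, p = MvPolynomial.pderiv j f} := by
        ext p
        constructor
        · rintro ⟨j, L, hL, rfl⟩
          match L with
          | [] => exact Or.inl ⟨j, [], by simp, rfl⟩
          | t :: L' =>
            exact Or.inr ⟨L'.foldr (fun t q => MvPolynomial.pderiv t q) (g j),
              ⟨j, L', Nat.succ_le_succ_iff.mp (by simpa using hL), rfl⟩, t, rfl⟩
        · rintro (⟨j, L, hL, rfl⟩ | ⟨f, ⟨j, L, hL, rfl⟩, t, rfl⟩)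
          · exact ⟨j, L, hL.trans (Nat.le_succ i), rfl⟩
          · exact ⟨j, t :: L, by simpa using Nat.succ_le_succ hL, rfl⟩
      rw [derivIdealIter, Function.iterate_succ_apply', ← derivIdealIter, ih,
        derivIdeal_span, hset]
  -- Part 2
  refine ⟨part1 i, ?_⟩
  -- encode lists of length ≤ i by functions `Fin i → Fin (n+1)`
  set toL : (Fin i → Fin (n + 1)) → List (Fin n) := fun f =>
    (List.ofFn f).filterMap (fun t : Fin (n + 1) => if h : (t : ℕ) < n then some (⟨t, h⟩ : Fin n) else none) with htoL
  set F : Fin l × (Fin i → Fin (n + 1)) → MvPolynomial (Fin n) K := fun p =>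
    (toL p.2).foldr (fun t q => MvPolynomial.pderiv t q) (g p.1) with hF
  refine ⟨Finset.image F Finset.univ, ?_, ?_, ?_⟩
  · calc (Finset.image F Finset.univ).card ≤ Finset.univ.card := Finset.card_image_le
    _ = l * (n + 1) ^ i := by simp [Fintype.card_prod, Fintype.card_fun]
    _ ≤ (n + 1) ^ i * l := le_of_eq (mul_comm _ _)
  · intro p hp
    obtain ⟨q, _, rfl⟩ := Finset.mem_image.mp hp
    have : ∀ (L : List (Fin n)),
        (L.foldr (fun t q => MvPolynomial.pderiv t q) (g q.1)).totalDegree ≤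
          (g q.1).totalDegree := by
      intro L
      induction L with
      | nil => exact le_rfl
      | cons t L ih => exact (totalDegree_pderiv_le' _ _).trans ih
    exact (this _).trans (Finset.le_sup (f := fun j => (g j).totalDegree) (Finset.mem_univ q.1))
  · rw [part1 i]
    apply le_antisymm
    · rw [Ideal.span_le]
      intro p hp
      obtain ⟨q, _, rfl⟩ := Finset.mem_image.mp (by exact_mod_cast hp)
      refine Ideal.subset_span ⟨q.1, toL q.2, ?_, rfl⟩
      calc (toL q.2).length ≤ (List.ofFn q.2).length := List.length_filterMap_le _ _
      _ = i := List.length_ofFn (f := q.2)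
    · rw [Ideal.span_le]
      rintro p ⟨j, L, hL, rfl⟩
      -- find an encoding of `L`
      have exists_enc : ∀ (m : ℕ) (L : List (Fin n)), L.length ≤ m →
          ∃ f : Fin m → Fin (n + 1), ((List.ofFn f).filterMap
            (fun t : Fin (n + 1) => if h : (t : ℕ) < n then some (⟨t, h⟩ : Fin n) else none)) = L := by
        intro m
        induction m with
        | zero =>
          intro L hL
          rw [List.length_eq_zero_iff.mp (Nat.le_zero.mp hL)]
          exact ⟨Fin.elim0, by simp⟩
        | succ m ih =>
          intro L hL
          match L with
          | [] =>
            obtain ⟨f, hf⟩ := ih [] (Nat.zero_le m)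
            refine ⟨Fin.cons (Fin.last n) f, ?_⟩
            rw [List.ofFn_succ]
            simp only [Fin.cons_zero, Fin.cons_succ]
            rw [List.filterMap_cons]
            simp [Fin.val_last, hf]
          | a :: L' =>
            obtain ⟨f, hf⟩ := ih L' (Nat.succ_le_succ_iff.mp (by simpa using hL))
            refine ⟨Fin.cons a.castSucc f, ?_⟩
            rw [List.ofFn_succ]
            simp only [Fin.cons_zero, Fin.cons_succ]
            rw [List.filterMap_cons]
            simp [Fin.coe_castSucc, a.isLt, hf]
      obtain ⟨f, hf⟩ := exists_enc i L hL
      refine Ideal.subset_span ?_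
      rw [Finset.coe_image]
      exact ⟨(j, f), Finset.mem_coe.mpr (Finset.mem_univ _), by simp [hF, htoL, hf]⟩
end

section
/- Let K be a field of positive characteristic p, let I be an ideal of K[x_1,…,x_n], and let μ be a natural number with 1 ≤ μ < p. Then for every 0 ≤ i ≤ μ−1 and every point a ∈ K^n, I ⊆ m_a^μ if and only if D^i(I) ⊆ m_a^{μ−i}; that is, supp(I,μ) = supp(D^i(I), μ−i) whenever the multiplicity μ is smaller than the characteristic. -/
namespace GVAux

open MvPolynomial

variable {K : Type*} [Field K] {n : ℕ}

lemma degree_add (s t : Fin n →₀ ℕ) :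
    Finsupp.degree (s + t) = Finsupp.degree s + Finsupp.degree t := by
  classical
  show (s + t).sum (fun _ e => e) = s.sum (fun _ e => e) + t.sum (fun _ e => e)
  exact Finsupp.sum_add_index' (fun _ => rfl) (fun _ _ _ => rfl)

lemma coeff_pderiv (j : Fin n) (f : MvPolynomial (Fin n) K) (t : Fin n →₀ ℕ) :
    coeff t (pderiv j f) =
      ((t j : K) + 1) * coeff (t + Finsupp.single j 1) f := by
  classical
  conv_lhs => rw [f.as_sum]
  rw [map_sum, coeff_sum]
  conv_rhs => rw [f.as_sum, coeff_sum, Finset.mul_sum]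
  refine Finset.sum_congr rfl fun v _ => ?_
  rw [pderiv_monomial, coeff_monomial, coeff_monomial]
  by_cases hv : v = t + Finsupp.single j 1
  · subst hv
    have h1 : t + Finsupp.single j 1 - Finsupp.single j 1 = t :=
      add_tsub_cancel_right t (Finsupp.single j 1)
    have h2 : (t + Finsupp.single j 1 : Fin n →₀ ℕ) j = t j + 1 := by
      simp [Finsupp.add_apply]
    rw [if_pos h1, if_pos rfl, h2]
    push_cast
    ring
  · rw [if_neg hv, mul_zero]
    by_cases hv2 : v - Finsupp.single j 1 = t
    · rw [if_pos hv2]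
      have hvj : v j = 0 := by
        by_contra hvj
        apply hv
        have : Finsupp.single j 1 ≤ v := by
          rw [Finsupp.single_le_iff]; omega
        rw [← hv2, tsub_add_cancel_of_le this]
      simp [hvj]
    · rw [if_neg hv2]

/-- The ideal of polynomials all of whose coefficients in degree `< μ` vanish. -/
def lowCoeff (μ : ℕ) : Ideal (MvPolynomial (Fin n) K) where
  carrier := {f | ∀ s : Fin n →₀ ℕ, Finsupp.degree s < μ → coeff s f = 0}
  add_mem' := fun hf hg s hs => by simp [coeff_add, hf s hs, hg s hs]
  zero_mem' := fun s _ => by simp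
  smul_mem' := by
    intro c f hf s hs
    rw [smul_eq_mul, coeff_mul]
    refine Finset.sum_eq_zero fun x hx => ?_
    rw [Finset.HasAntidiagonal.mem_antidiagonal] at hx
    have : Finsupp.degree x.2 < μ := by
      have := degree_add x.1 x.2
      rw [hx] at this
      omega
    rw [hf x.2 this, mul_zero]

lemma mem_lowCoeff {μ : ℕ} {f : MvPolynomial (Fin n) K} :
    f ∈ (lowCoeff μ : Ideal (MvPolynomial (Fin n) K)) ↔
      ∀ s : Fin n →₀ ℕ, Finsupp.degree s < μ → coeff s f = 0 := Iff.rfl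

lemma X_mem_maxIdeal_zero (i : Fin n) :
    (X i : MvPolynomial (Fin n) K) ∈ maxIdeal K (Fin n) 0 := by
  have : (X i : MvPolynomial (Fin n) K) = X i - C ((0 : Fin n → K) i) := by simp
  rw [this]
  exact Ideal.subset_span ⟨i, rfl⟩

lemma pow_le_lowCoeff (μ : ℕ) :
    (maxIdeal K (Fin n) 0) ^ μ ≤ (lowCoeff μ : Ideal (MvPolynomial (Fin n) K)) := by
  induction μ with
  | zero => intro f _ s hs; omega
  | succ μ ih =>
    rw [pow_succ]
    refine Ideal.mul_le.mpr fun f hf g hg => ?_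
    have hM : maxIdeal K (Fin n) 0 ≤ (lowCoeff 1 : Ideal (MvPolynomial (Fin n) K)) := by
      rw [maxIdeal, Ideal.span_le]
      rintro _ ⟨i, rfl⟩
      intro s hs
      have hs0 : s = 0 := by
        rw [← Finsupp.degree_eq_zero_iff]; omega
      subst hs0
      simp [coeff_X', Finsupp.single_eq_zero]
    have hg1 := hM hg
    intro s hs
    rw [coeff_mul]
    refine Finset.sum_eq_zero fun x hx => ?_
    rw [Finset.HasAntidiagonal.mem_antidiagonal] at hx
    have hdeg : Finsupp.degree x.1 + Finsupp.degree x.2 < μ + 1 := by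
      rw [← degree_add, hx]; exact hs
    by_cases h1 : Finsupp.degree x.1 < μ
    · rw [ih hf x.1 h1, zero_mul]
    · rw [hg1 x.2 (by omega), mul_zero]

lemma monomial_mem_pow (s : Fin n →₀ ℕ) (c : K) :
    (monomial s c : MvPolynomial (Fin n) K) ∈ (maxIdeal K (Fin n) 0) ^ (Finsupp.degree s) := by
  classical
  induction s using Finsupp.induction with
  | zero => simp
  | single_add i k t hit hk ih =>
    have hdeg : Finsupp.degree (Finsupp.single i k + t) = k + Finsupp.degree t := by
      rw [degree_add]
      congr 1
      show (Finsupp.single i k).sum (fun _ e => e) = k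
      rw [Finsupp.sum_single_index]; rfl
    rw [hdeg, pow_add]
    have : (monomial (Finsupp.single i k + t) c : MvPolynomial (Fin n) K)
        = (X i) ^ k * monomial t c := by
      rw [X_pow_eq_monomial, monomial_mul, one_mul]
    rw [this]
    exact Ideal.mul_mem_mul (Ideal.pow_mem_pow (X_mem_maxIdeal_zero i) k) ih

lemma mem_pow_maxIdeal_zero_iff (μ : ℕ) (f : MvPolynomial (Fin n) K) :
    f ∈ (maxIdeal K (Fin n) 0) ^ μ ↔
      ∀ s : Fin n →₀ ℕ, Finsupp.degree s < μ → coeff s f = 0 := by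
  constructor
  · exact fun h => pow_le_lowCoeff μ h
  · intro h
    rw [f.as_sum]
    refine Ideal.sum_mem _ fun v hv => ?_
    have hc : coeff v f ≠ 0 := MvPolynomial.mem_support_iff.mp hv
    have hdeg : μ ≤ Finsupp.degree v := by
      by_contra hlt
      exact hc (h v (by omega))
    exact Ideal.pow_le_pow_right hdeg (monomial_mem_pow v (coeff v f))


lemma derivIdeal_le_iff {I J : Ideal (MvPolynomial (Fin n) K)} :
    derivIdeal I ≤ J ↔ I ≤ J ∧ ∀ f ∈ I, ∀ j : Fin n, pderiv j f ∈ J := by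
  rw [derivIdeal, Ideal.span_le, Set.union_subset_iff]
  constructor
  · rintro ⟨h1, h2⟩
    exact ⟨h1, fun f hf j => h2 ⟨f, hf, j, rfl⟩⟩
  · rintro ⟨h1, h2⟩
    refine ⟨h1, ?_⟩
    rintro _ ⟨f, hf, j, rfl⟩
    exact h2 f hf j

lemma step_zero (p : ℕ) [CharP K p] (ν : ℕ) (hν : 1 ≤ ν) (hνp : ν < p)
    (I : Ideal (MvPolynomial (Fin n) K)) :
    I ≤ (maxIdeal K (Fin n) 0) ^ (ν + 1) ↔
      derivIdeal I ≤ (maxIdeal K (Fin n) 0) ^ ν := by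
  constructor
  · intro h
    rw [derivIdeal_le_iff]
    constructor
    · exact le_trans h (Ideal.pow_le_pow_right (by omega))
    · intro f hf j
      rw [mem_pow_maxIdeal_zero_iff]
      intro t ht
      rw [coeff_pderiv]
      have hc : coeff (t + Finsupp.single j 1) f = 0 := by
        refine (mem_pow_maxIdeal_zero_iff _ f).mp (h hf) _ ?_
        rw [degree_add]
        have : Finsupp.degree (Finsupp.single j 1) = 1 := by
          show (Finsupp.single j 1).sum (fun _ e => e) = 1
          rw [Finsupp.sum_single_index]; rfl
        omega
      rw [hc, mul_zero]
  · intro h f hf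
    rw [mem_pow_maxIdeal_zero_iff]
    intro s hs
    have hfI : f ∈ derivIdeal I := Ideal.subset_span (Or.inl hf)
    have hfν := (mem_pow_maxIdeal_zero_iff ν f).mp (h hfI)
    by_cases hlt : Finsupp.degree s < ν
    · exact hfν s hlt
    · have hdeg : Finsupp.degree s = ν := by omega
      have hs0 : s ≠ 0 := by
        intro h0
        rw [h0, map_zero] at hdeg
        omega
      obtain ⟨j, hj⟩ : ∃ j, s j ≠ 0 := by
        by_contra hc
        push_neg at hc
        exact hs0 (Finsupp.ext hc)
      have hle : Finsupp.single j 1 ≤ s := by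
        rw [Finsupp.single_le_iff]; omega
      have hsplit : (s - Finsupp.single j 1) + Finsupp.single j 1 = s :=
        tsub_add_cancel_of_le hle
      have hdeg1 : Finsupp.degree (Finsupp.single j 1) = 1 := by
        show (Finsupp.single j 1).sum (fun _ e => e) = 1
        rw [Finsupp.sum_single_index]; rfl
      have hdegsub : Finsupp.degree (s - Finsupp.single j 1) = ν - 1 := by
        have := degree_add (s - Finsupp.single j 1) (Finsupp.single j 1)
        rw [hsplit, hdeg1, hdeg] at this
        omega
      have hdf : pderiv j f ∈ (maxIdeal K (Fin n) 0) ^ ν :=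
        h (Ideal.subset_span (Or.inr ⟨f, hf, j, rfl⟩))
      have h0 : coeff (s - Finsupp.single j 1) (pderiv j f) = 0 :=
        (mem_pow_maxIdeal_zero_iff ν _).mp hdf _ (by omega)
      rw [coeff_pderiv, hsplit] at h0
      have hsj : ((s - Finsupp.single j 1 : Fin n →₀ ℕ) j : K) + 1 = ((s j : ℕ) : K) := by
        have : (s - Finsupp.single j 1 : Fin n →₀ ℕ) j = s j - 1 := by
          rw [Finsupp.tsub_apply, Finsupp.single_eq_same]
        rw [this]
        have h2 : s j - 1 + 1 = s j := by omega
        conv_rhs => rw [← h2]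
        push_cast
        ring
      rw [hsj] at h0
      have hcast : ((s j : ℕ) : K) ≠ 0 := by
        rw [Ne, CharP.cast_eq_zero_iff K p]
        intro hdvd
        have hsjle : s j ≤ ν := le_trans (Finsupp.le_degree j s) (le_of_eq hdeg)
        have := Nat.le_of_dvd (by omega) hdvd
        omega
      exact (mul_eq_zero.mp h0).resolve_left hcast

lemma iter_zero (p : ℕ) [CharP K p] (μ i : ℕ) (hμ : 1 ≤ μ) (hμp : μ < p)
    (hi : i ≤ μ - 1) (I : Ideal (MvPolynomial (Fin n) K)) :
    I ≤ (maxIdeal K (Fin n) 0) ^ μ ↔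
      derivIdealIter i I ≤ (maxIdeal K (Fin n) 0) ^ (μ - i) := by
  induction i with
  | zero => simp [derivIdealIter]
  | succ i ih =>
    rw [ih (by omega)]
    have hexp : μ - i = (μ - (i + 1)) + 1 := by omega
    rw [hexp, step_zero p (μ - (i+1)) (by omega) (by omega)]
    rw [derivIdealIter, derivIdealIter, Function.iterate_succ_apply']

/-- Translation by `a` as an algebra automorphism of the polynomial ring. -/
noncomputable def shift (a : Fin n → K) :
    MvPolynomial (Fin n) K ≃ₐ[K] MvPolynomial (Fin n) K :=
  AlgEquiv.ofAlgHom (aeval fun i => X i + C (a i)) (aeval fun i => X i - C (a i))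
    (by ext i <;> simp) (by ext i <;> simp)

lemma shift_apply (a : Fin n → K) (f : MvPolynomial (Fin n) K) :
    shift a f = aeval (fun i => X i + C (a i)) f := rfl

lemma pderiv_shift (a : Fin n → K) (j : Fin n) (f : MvPolynomial (Fin n) K) :
    pderiv j (shift a f) = shift a (pderiv j f) := by
  classical
  induction f using MvPolynomial.induction_on with
  | C c => simp [shift_apply, pderiv_C]
  | add f g hf hg => simp [map_add, hf, hg]
  | mul_X f i hf =>
    have shift_X : ∀ k, shift a (X k : MvPolynomial (Fin n) K) = X k + C (a k) := fun k => by
      simp [shift_apply]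
    rcases eq_or_ne i j with rfl | hne
    · simp only [map_mul, shift_X, pderiv_mul, map_add, hf, pderiv_X_self, pderiv_C,
        mul_one, add_zero]
    · simp only [map_mul, shift_X, pderiv_mul, map_add, hf, pderiv_X_of_ne hne,
        pderiv_C, mul_zero, add_zero]

lemma map_shift_maxIdeal (a : Fin n → K) :
    Ideal.map (shift a : MvPolynomial (Fin n) K ≃+* MvPolynomial (Fin n) K)
        (maxIdeal K (Fin n) a) = maxIdeal K (Fin n) 0 := by
  rw [maxIdeal, Ideal.map_span]
  congr 1
  rw [← Set.range_comp]
  refine congrArg _ (funext fun i => ?_)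
  show shift a (X i - C (a i)) = X i - C ((0 : Fin n → K) i)
  simp [shift_apply, map_sub, aeval_X, aeval_C]

lemma map_shift_derivIdeal (a : Fin n → K) (I : Ideal (MvPolynomial (Fin n) K)) :
    Ideal.map (shift a : MvPolynomial (Fin n) K ≃+* MvPolynomial (Fin n) K) (derivIdeal I)
      = derivIdeal (Ideal.map (shift a : MvPolynomial (Fin n) K ≃+* MvPolynomial (Fin n) K) I) := by
  set e : MvPolynomial (Fin n) K ≃+* MvPolynomial (Fin n) K :=
    (shift a : MvPolynomial (Fin n) K ≃+* MvPolynomial (Fin n) K) with he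
  rw [derivIdeal, derivIdeal, Ideal.map_span, Set.image_union]
  congr 1
  congr 1
  · ext y
    simp only [Set.mem_image, SetLike.mem_coe]
    exact (Ideal.mem_map_of_equiv e y).symm
  · ext g
    simp only [Set.mem_image, Set.mem_setOf_eq]
    constructor
    · rintro ⟨_, ⟨f, hf, j, rfl⟩, rfl⟩
      refine ⟨e f, (Ideal.mem_map_of_equiv e (e f)).mpr ⟨f, hf, rfl⟩, j, ?_⟩
      exact (pderiv_shift a j f).symm
    · rintro ⟨f', hf', j, rfl⟩
      obtain ⟨f, hf, rfl⟩ := (Ideal.mem_map_of_equiv e f').mp hf'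
      refine ⟨pderiv j f, ⟨f, hf, j, rfl⟩, ?_⟩
      exact (pderiv_shift a j f).symm

lemma map_shift_derivIdealIter (a : Fin n → K) (i : ℕ) (I : Ideal (MvPolynomial (Fin n) K)) :
    Ideal.map (shift a : MvPolynomial (Fin n) K ≃+* MvPolynomial (Fin n) K) (derivIdealIter i I)
      = derivIdealIter i
          (Ideal.map (shift a : MvPolynomial (Fin n) K ≃+* MvPolynomial (Fin n) K) I) := by
  induction i with
  | zero => simp [derivIdealIter]
  | succ i ih =>
    rw [derivIdealIter, derivIdealIter, Function.iterate_succ_apply',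
      Function.iterate_succ_apply', map_shift_derivIdeal]
    rw [derivIdealIter, derivIdealIter] at ih
    rw [ih]

lemma map_le_map_iff (a : Fin n → K) (I J : Ideal (MvPolynomial (Fin n) K)) :
    Ideal.map (shift a : MvPolynomial (Fin n) K ≃+* MvPolynomial (Fin n) K) I
      ≤ Ideal.map (shift a : MvPolynomial (Fin n) K ≃+* MvPolynomial (Fin n) K) J
    ↔ I ≤ J := by
  set e : MvPolynomial (Fin n) K ≃+* MvPolynomial (Fin n) K :=
    (shift a : MvPolynomial (Fin n) K ≃+* MvPolynomial (Fin n) K)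
  constructor
  · intro h x hx
    have : e x ∈ Ideal.map e J := h (Ideal.mem_map_of_mem e hx)
    rwa [Ideal.apply_mem_of_equiv_iff] at this
  · exact Ideal.map_mono

end GVAux

/-- Positive-characteristic variant of the Giraud–Villamayor lemma: over a field of
characteristic `p > 0`, if `1 ≤ μ < p` and `i ≤ μ - 1`, then
`supp(I,μ) = supp(D^i(I), μ-i)`, i.e. `I ⊆ m_a^μ ↔ D^i(I) ⊆ m_a^{μ-i}` for every `a`. -/
theorem supp_derivIdealIter_charP (K : Type*) [Field K] (p : ℕ) [CharP K p]
    (hp : 0 < p) (n : ℕ) (I : Ideal (MvPolynomial (Fin n) K)) (μ i : ℕ)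
    (hμ : 1 ≤ μ) (hμp : μ < p) (hi : i ≤ μ - 1) (a : Fin n → K) :
    I ≤ maxIdeal K (Fin n) a ^ μ ↔
      derivIdealIter i I ≤ maxIdeal K (Fin n) a ^ (μ - i) := by
  have hmax : ∀ ν : ℕ,
      Ideal.map (GVAux.shift a : MvPolynomial (Fin n) K ≃+* MvPolynomial (Fin n) K)
        (maxIdeal K (Fin n) a ^ ν) = maxIdeal K (Fin n) 0 ^ ν := fun ν => by
    rw [Ideal.map_pow, GVAux.map_shift_maxIdeal]
  rw [← GVAux.map_le_map_iff a I (maxIdeal K (Fin n) a ^ μ),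
    ← GVAux.map_le_map_iff a (derivIdealIter i I) (maxIdeal K (Fin n) a ^ (μ - i)),
    hmax μ, hmax (μ - i), GVAux.map_shift_derivIdealIter]
  exact GVAux.iter_zero p μ i hμ hμp hi _
end
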